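/- arXiv:2005.05204 — 6 statements merged into one kernel-verified Lean document; each statement's English description precedes it below -/
import Mathlib

section
/- Let m ≥ 1 be an integer, φ ∈ ℂ, and 0 < r′ < r. Let ξ : ℂ → ℂ be holomorphic on {z : |z − φ| > r′} and suppose that (z − φ)^{−(m−1)} ξ(z) → 0 as |z| → ∞. Then for every p ∈ ℂ with |p − φ| > r one has (1/(2πi)) ∮_{|z−φ|=r} (p − φ)^{m−1} ξ(z) / ((p − z)(z − φ)^{m−1}) dz = ξ(p). -/
open Complex Filter

/-- Reproducing identity `⟨da(p), ξ⟩ = ξ(p)`: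
for `m ≥ 1`, `φ ∈ ℂ`, `0 < r' < r`, `ξ` holomorphic on `{|z-φ| > r'}` with
`(z-φ)^{-(m-1)} ξ(z) → 0` as `|z| → ∞`, and any `p` with `|p-φ| > r`,
`(1/(2πi)) ∮_{|z-φ|=r} (p-φ)^{m-1} ξ(z) / ((p-z)(z-φ)^{m-1}) dz = ξ(p)`. -/
theorem stmt0 (m : ℕ) (hm : 1 ≤ m) (φ : ℂ) (r' r : ℝ) (hr' : 0 < r') (hr'r : r' < r)
    (ξ : ℂ → ℂ)
    (hξ : DifferentiableOn ℂ ξ {z : ℂ | r' < ‖z - φ‖})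
    (hdecay : Tendsto (fun z : ℂ => (z - φ) ^ (-((m : ℤ) - 1)) * ξ z)
      (comap (fun z : ℂ => ‖z‖) atTop) (nhds 0)) :
    ∀ p : ℂ, r < ‖p - φ‖ →
      (2 * Real.pi * Complex.I)⁻¹ *
        (∮ z in C(φ, r), (p - φ) ^ (m - 1) * ξ z / ((p - z) * (z - φ) ^ (m - 1)))
        = ξ p := by
  intro p hp
  set k := m - 1 with hk
  have hr0 : (0 : ℝ) < r := hr'.trans hr'r
  set S : Set ℂ := {z : ℂ | r' < ‖z - φ‖} with hS
  have hSopen : IsOpen S := by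
    have : Continuous fun z : ℂ => ‖z - φ‖ :=
      continuous_norm.comp (continuous_id.sub continuous_const)
    exact isOpen_lt continuous_const this
  have hsubS : ∀ z : ℂ, r ≤ ‖z - φ‖ → z ∈ S := fun z hz =>
    lt_of_lt_of_le hr'r hz
  have hsub_ne : ∀ z : ℂ, z ∈ S → z - φ ≠ 0 := by
    intro z hz
    intro h
    simp only [hS, Set.mem_setOf_eq, h, norm_zero] at hz
    exact absurd hz (not_lt.2 hr'.le)
  have hpS : p ∈ S := hsubS p (le_of_lt hp)
  have hpφ : p - φ ≠ 0 := hsub_ne p hpS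
  -- the auxiliary holomorphic function F
  set F : ℂ → ℂ := fun z => (p - φ) ^ k * ξ z / (z - φ) ^ k with hFdef
  have hF : DifferentiableOn ℂ F S := by
    apply DifferentiableOn.div
    · exact (differentiableOn_const _).mul hξ
    · exact ((differentiable_id.sub_const φ).pow k).differentiableOn
    · intro z hz; exact pow_ne_zero _ (hsub_ne z hz)
  have hFp : F p = ξ p := by
    simp only [hFdef]
    rw [mul_comm, mul_div_assoc, div_self (pow_ne_zero _ hpφ), mul_one]
  -- dslope of F at p
  set G : ℂ → ℂ := dslope F p with hGdef
  have hG : DifferentiableOn ℂ G S :=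
    (Complex.differentiableOn_dslope (hSopen.mem_nhds hpS)).mpr hF
  set H : ℂ → ℂ := fun z => F z / (z - p) with hHdef
  -- splitting the circle integral of H over a circle of radius ρ not containing p
  have hsplit : ∀ ρ : ℝ, r ≤ ρ → ρ ≠ ‖p - φ‖ →
      (∮ z in C(φ, ρ), H z) =
        (∮ z in C(φ, ρ), G z) + F p * (∮ z in C(φ, ρ), (z - p)⁻¹) := by
    intro ρ hρr hρp
    have hρ0 : (0 : ℝ) ≤ ρ := hr0.le.trans hρr
    have hzne : ∀ z ∈ Metric.sphere φ ρ, z ≠ p := by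
      intro z hz hzp
      rw [Metric.mem_sphere, Complex.dist_eq] at hz
      exact hρp (hzp ▸ hz.symm ▸ rfl)
    have hsphS : Metric.sphere φ ρ ⊆ S := by
      intro z hz
      rw [Metric.mem_sphere, Complex.dist_eq] at hz
      exact hsubS z (hz ▸ hρr)
    have hcongr : ∀ z ∈ Metric.sphere φ ρ, H z = G z + F p * (z - p)⁻¹ := by
      intro z hz
      have hzp : z - p ≠ 0 := sub_ne_zero.2 (hzne z hz)
      rw [hGdef, dslope_of_ne F (sub_ne_zero.1 hzp), slope_def_field]
      field_simp [hHdef]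
      simp only [hHdef, div_mul_cancel₀ _ hzp]
      ring
    rw [circleIntegral.integral_congr hρ0 hcongr]
    have hGi : CircleIntegrable G φ ρ :=
      ((hG.continuousOn).mono hsphS).circleIntegrable hρ0
    have hIi : CircleIntegrable (fun z => F p * (z - p)⁻¹) φ ρ := by
      apply ContinuousOn.circleIntegrable hρ0
      apply continuousOn_const.mul
      exact ContinuousOn.inv₀ ((continuous_id.sub continuous_const).continuousOn)
        (fun z hz => sub_ne_zero.2 (hzne z hz))
    have hinvI : CircleIntegrable (fun z : ℂ => (z - p)⁻¹) φ ρ := by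
      apply ContinuousOn.circleIntegrable hρ0
      exact ContinuousOn.inv₀ ((continuous_id.sub continuous_const).continuousOn)
        (fun z hz => sub_ne_zero.2 (hzne z hz))
    have hadd : (∮ z in C(φ, ρ), (G z + F p * (z - p)⁻¹)) =
        (∮ z in C(φ, ρ), G z) - (∮ z in C(φ, ρ), -(F p * (z - p)⁻¹)) := by
      have := circleIntegral.integral_sub hGi hIi.neg
      simpa [sub_neg_eq_add] using this
    rw [hadd]
    have hneg : (∮ z in C(φ, ρ), -(F p * (z - p)⁻¹)) = -(F p * ∮ z in C(φ, ρ), (z - p)⁻¹) := by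
      have := circleIntegral.integral_smul (-(F p) : ℂ) (fun z => (z - p)⁻¹) φ ρ
      simpa [smul_eq_mul, neg_mul] using this
    rw [hneg, sub_neg_eq_add]
  -- the key identity for every big radius R
  have hkey : ∀ R : ℝ, ‖p - φ‖ < R →
      (∮ z in C(φ, r), H z) = (∮ z in C(φ, R), H z) - 2 * Real.pi * Complex.I * ξ p := by
    intro R hR
    have hrR : r ≤ R := le_of_lt (hp.trans hR)
    have hsplitR := hsplit R hrR (ne_of_gt hR)
    have hsplitr := hsplit r le_rfl (ne_of_lt hp)
    have hGeq : (∮ z in C(φ, R), G z) = ∮ z in C(φ, r), G z := by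
      apply circleIntegral_eq_of_differentiable_on_annulus_off_countable hr0 hrR
        Set.countable_empty
      · apply (hG.continuousOn).mono
        intro z hz
        apply hsubS
        have := hz.2
        rw [Metric.mem_ball, not_lt, Complex.dist_eq] at this
        exact this
      · intro z hz
        have hzS : z ∈ S := by
          apply hsubS
          have := hz.1.2
          rw [Metric.mem_closedBall, not_le, Complex.dist_eq] at this
          exact this.le
        exact hG.differentiableAt (hSopen.mem_nhds hzS)
    have hinvR : (∮ z in C(φ, R), (z - p)⁻¹) = 2 * Real.pi * Complex.I :=
      circleIntegral.integral_sub_inv_of_mem_ball (by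
        rw [Metric.mem_ball, Complex.dist_eq]; exact hR)
    have hinvr : (∮ z in C(φ, r), (z - p)⁻¹) = 0 := by
      apply Complex.circleIntegral_eq_zero_of_differentiable_on_off_countable hr0.le
        Set.countable_empty
      · apply ContinuousOn.inv₀ ((continuous_id.sub continuous_const).continuousOn)
        intro z hz
        rw [Metric.mem_closedBall, Complex.dist_eq] at hz
        exact sub_ne_zero.2 fun h => absurd ((show z = p from h) ▸ hz) (not_le.2 hp)
      · intro z hz
        have hzr : ‖z - φ‖ < r := by
          have := hz.1
          rwa [Metric.mem_ball, Complex.dist_eq] at this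
        exact (differentiableAt_id.sub_const p).inv
          (sub_ne_zero.2 fun h => absurd (h ▸ hzr) (not_lt.2 hp.le))
    rw [hsplitR, hsplitr, hGeq, hinvR, hinvr, hFp]
    ring
  -- the limit of the integral over big circles is 0
  have hlim : Tendsto (fun R : ℝ => ∮ z in C(φ, R), H z) atTop (nhds 0) := by
    rw [Metric.tendsto_atTop]
    intro ε hε
    set K : ℝ := ‖(p - φ) ^ k‖ with hKdef
    have hK0 : 0 ≤ K := norm_nonneg _
    set δ : ℝ := ε / (4 * Real.pi * (K + 1)) with hδdef
    have hδ : 0 < δ := by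
      apply div_pos hε
      have := Real.pi_pos
      positivity
    have hev : ∀ᶠ b : ℝ in atTop, ∀ z : ℂ, ‖z‖ = b →
        ‖(z - φ) ^ (-((m : ℤ) - 1)) * ξ z‖ < δ := by
      have h1 := Metric.tendsto_nhds.mp hdecay δ hδ
      rw [eventually_comap] at h1
      simpa [Complex.dist_eq] using h1
    obtain ⟨M, hM⟩ := eventually_atTop.mp hev
    refine ⟨max (max (M + ‖φ‖) (2 * ‖p - φ‖)) 1, fun R hR => ?_⟩
    have hR1 : (1 : ℝ) ≤ R := le_trans (le_max_right _ _) hR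
    have hR0 : (0 : ℝ) < R := lt_of_lt_of_le one_pos hR1
    have hRM : M + ‖φ‖ ≤ R :=
      le_trans (le_trans (le_max_left _ _) (le_max_left _ _)) hR
    have hRp : 2 * ‖p - φ‖ ≤ R :=
      le_trans (le_trans (le_max_right _ _) (le_max_left _ _)) hR
    -- pointwise bound on the sphere
    have hbound : ∀ z ∈ Metric.sphere φ R, ‖H z‖ ≤ K * δ * (2 / R) := by
      intro z hz
      rw [Metric.mem_sphere, Complex.dist_eq] at hz
      have hzabs : M ≤ ‖z‖ := by
        have h1 : ‖z - φ‖ ≤ ‖z‖ + ‖φ‖ := by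
          simpa using norm_sub_le z φ
        linarith [hz ▸ h1]
      have hδz := hM (‖z‖) hzabs z rfl
      -- rewrite the zpow
      have hzpow : (z - φ) ^ (-((m : ℤ) - 1)) = ((z - φ) ^ k)⁻¹ := by
        have : -((m : ℤ) - 1) = -(k : ℤ) := by
          rw [hk]; push_cast [Nat.cast_sub hm]; ring
        rw [this, zpow_neg, zpow_natCast]
      rw [hzpow] at hδz
      have hzφk : ‖(z - φ) ^ k‖ = R ^ k := by
        rw [norm_pow, hz]
      have hξz : ‖ξ z‖ / R ^ k < δ := by
        rw [norm_mul, norm_inv, hzφk] at hδz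
        rw [div_eq_inv_mul]
        exact hδz
      have hzp : ‖p - φ‖ ≤ R / 2 := by linarith
      have hzpge : R / 2 ≤ ‖z - p‖ := by
        have htri : ‖z - φ‖ ≤ ‖z - p‖ + ‖p - φ‖ :=
          norm_sub_le_norm_sub_add_norm_sub z p φ
        rw [hz] at htri
        linarith
      have hzpne : (0:ℝ) < ‖z - p‖ := lt_of_lt_of_le (by linarith) hzpge
      have hHabs : ‖H z‖ = K * ‖ξ z‖ / R ^ k / ‖z - p‖ := by
        simp only [hHdef, hFdef, norm_div, norm_mul, hzφk, hKdef]
      rw [hHabs]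
      have hRk : (0:ℝ) < R ^ k := pow_pos hR0 k
      have h1 : K * ‖ξ z‖ / R ^ k ≤ K * δ := by
        rw [mul_div_assoc]
        exact mul_le_mul_of_nonneg_left hξz.le hK0
      have h2 : (‖z - p‖)⁻¹ ≤ 2 / R := by
        rw [div_eq_mul_inv, ← one_div, one_div]
        have : (R / 2)⁻¹ = 2 * R⁻¹ := by
          field_simp
        rw [← this]
        exact inv_anti₀ (by linarith) hzpge
      calc K * ‖ξ z‖ / R ^ k / ‖z - p‖
          = (K * ‖ξ z‖ / R ^ k) * (‖z - p‖)⁻¹ := by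
            rw [div_eq_mul_inv]
        _ ≤ (K * δ) * (2 / R) := by
            apply mul_le_mul h1 h2 (inv_nonneg.2 (norm_nonneg _))
            positivity
    have hnorm := circleIntegral.norm_integral_le_of_norm_le_const hR0.le hbound
    rw [dist_zero_right]
    calc ‖∮ z in C(φ, R), H z‖ ≤ 2 * Real.pi * R * (K * δ * (2 / R)) := hnorm
      _ = 4 * Real.pi * K * δ := by field_simp; ring
      _ < ε := by
          have hπ : (0:ℝ) < Real.pi := Real.pi_pos
          have h4 : (0:ℝ) < 4 * Real.pi * (K + 1) := by positivity
          have hq : 4 * Real.pi * K / (4 * Real.pi * (K + 1)) < 1 :=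
            (div_lt_one h4).mpr (by nlinarith)
          calc 4 * Real.pi * K * δ = 4 * Real.pi * K / (4 * Real.pi * (K + 1)) * ε := by
                rw [hδdef]; ring
            _ < 1 * ε := mul_lt_mul_of_pos_right hq hε
            _ = ε := one_mul ε
    -- end of hlim
  -- conclude the value of the small circle integral
  have hsmall : (∮ z in C(φ, r), H z) = -(2 * Real.pi * Complex.I * ξ p) := by
    have hev : ∀ᶠ R : ℝ in atTop,
        (∮ z in C(φ, r), H z) = (∮ z in C(φ, R), H z) - 2 * Real.pi * Complex.I * ξ p := by
      filter_upwards [eventually_gt_atTop (‖p - φ‖)] with R hR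
      exact hkey R hR
    have h1 : Tendsto (fun R : ℝ => (∮ z in C(φ, R), H z) - 2 * Real.pi * Complex.I * ξ p)
        atTop (nhds (0 - 2 * Real.pi * Complex.I * ξ p)) :=
      hlim.sub tendsto_const_nhds
    have h2 : Tendsto (fun _ : ℝ => (∮ z in C(φ, r), H z)) atTop
        (nhds (0 - 2 * Real.pi * Complex.I * ξ p)) :=
      h1.congr' (by filter_upwards [hev] with R hR using hR.symm)
    have h3 := tendsto_nhds_unique h2 tendsto_const_nhds
    rw [← h3]; ring
  -- relate the original integrand to -H
  have hcongr : ∀ z ∈ Metric.sphere φ r,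
      (p - φ) ^ (m - 1) * ξ z / ((p - z) * (z - φ) ^ (m - 1)) = -(H z) := by
    intro z hz
    rw [Metric.mem_sphere, Complex.dist_eq] at hz
    have hzφ : z - φ ≠ 0 := by
      intro h; rw [h, norm_zero] at hz; exact absurd hz.symm (ne_of_gt hr0)
    have hzp : p - z ≠ 0 := by
      rw [sub_ne_zero]
      intro h
      rw [h, hz] at hp
      exact lt_irrefl r hp
    have hzp' : z - p ≠ 0 := by
      rw [sub_ne_zero] at hzp ⊢
      exact fun h => hzp h.symm
    have hzφk : (z - φ) ^ k ≠ 0 := pow_ne_zero _ hzφ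
    simp only [hHdef]
    rw [div_div, ← div_neg]
    congr 1
    ring
  rw [circleIntegral.integral_congr hr0.le hcongr]
  have hneg : (∮ z in C(φ, r), -(H z)) = -(∮ z in C(φ, r), H z) := by
    simpa using circleIntegral.integral_smul (-1 : ℂ) H φ r
  rw [hneg, hsmall, neg_neg]
  have h2πI : (2 * (Real.pi : ℂ) * Complex.I) ≠ 0 := by
    simp [Real.pi_ne_zero, Complex.I_ne_zero]
  rw [inv_mul_cancel_left₀ h2πI]
end

section
/- Let 0 < r < ρ < R. Suppose g is holomorphic on {z : |z| < R}, h is holomorphic on {z : |z| > r}, and h(z) → 0 as |z| → ∞. Then for every z₁ with |z₁| > ρ one has (1/(2πi)) ∮_{|z₂|=ρ} (g′(z₂) + h′(z₂)) · Log(1 − z₂/z₁) dz₂ = h(z₁), where Log is the principal branch of the complex logarithm. -/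
open Complex Filter

open Metric Set intervalIntegral

/-- Circle integral of a derivative of a holomorphic function is zero. -/
lemma circleInt_deriv_zero {U : Set ℂ} (hU : IsOpen U) {F : ℂ → ℂ}
    (hF : DifferentiableOn ℂ F U) {ρ : ℝ} (hρ : 0 ≤ ρ)
    (hsub : sphere (0:ℂ) ρ ⊆ U) :
    (∮ z in C(0, ρ), deriv F z) = 0 := by
  have hmem : ∀ θ : ℝ, circleMap 0 ρ θ ∈ U := fun θ => hsub (circleMap_mem_sphere 0 hρ θ)
  have hkey : ∀ θ ∈ Set.uIcc (0:ℝ) (2*Real.pi),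
      HasDerivAt (fun t => F (circleMap 0 ρ t))
        (deriv (circleMap 0 ρ) θ • deriv F (circleMap 0 ρ θ)) θ := by
    intro θ _
    have h1 : HasDerivAt F (deriv F (circleMap 0 ρ θ)) (circleMap 0 ρ θ) :=
      (hF.differentiableAt (hU.mem_nhds (hmem θ))).hasDerivAt
    have h2 := hasDerivAt_circleMap 0 ρ θ
    have h3 := h1.comp θ h2
    simpa [deriv_circleMap, smul_eq_mul, mul_comm, Function.comp_def] using h3
  have hcont : ContinuousOn (fun θ : ℝ => deriv (circleMap 0 ρ) θ • deriv F (circleMap 0 ρ θ))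
      (Set.uIcc (0:ℝ) (2*Real.pi)) := by
    apply ContinuousOn.fun_smul
    · exact ((continuous_circleMap 0 ρ).mul continuous_const).continuousOn.congr
        (fun θ _ => deriv_circleMap 0 ρ θ)
    · exact ((hF.analyticOnNhd hU).deriv.continuousOn.comp
        (continuous_circleMap 0 ρ).continuousOn (fun θ _ => hmem θ))
  rw [circleIntegral]
  rw [intervalIntegral.integral_eq_sub_of_hasDerivAt hkey (hcont.intervalIntegrable)]
  have := (periodic_circleMap 0 ρ) 0
  simp only [zero_add] at this
  rw [this, sub_self]

lemma circleIntegral_add' {f g : ℂ → ℂ} {c : ℂ} {R : ℝ} (hf : CircleIntegrable f c R)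
    (hg : CircleIntegrable g c R) :
    (∮ z in C(c, R), f z + g z) = (∮ z in C(c, R), f z) + ∮ z in C(c, R), g z := by
  simp only [circleIntegral, smul_add, intervalIntegral.integral_add hf.out hg.out]

/-- Integration by parts on a circle. -/
lemma circleInt_byparts {U : Set ℂ} (hU : IsOpen U) {F φ : ℂ → ℂ}
    (hF : DifferentiableOn ℂ F U) (hφ : DifferentiableOn ℂ φ U) {ρ : ℝ} (hρ : 0 ≤ ρ)
    (hsub : sphere (0:ℂ) ρ ⊆ U) :
    (∮ z in C(0, ρ), deriv F z * φ z) = - ∮ z in C(0, ρ), F z * deriv φ z := by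
  have h0 := circleInt_deriv_zero hU (F := fun z => F z * φ z) (hF.mul hφ) hρ hsub
  have heq : Set.EqOn (deriv (fun z => F z * φ z))
      (fun z => deriv F z * φ z + F z * deriv φ z) (sphere (0:ℂ) ρ) := by
    intro z hz
    exact deriv_mul (hF.differentiableAt (hU.mem_nhds (hsub hz)))
      (hφ.differentiableAt (hU.mem_nhds (hsub hz)))
  rw [circleIntegral.integral_congr hρ heq] at h0
  have hc1 : CircleIntegrable (fun z => deriv F z * φ z) 0 ρ :=
    (((hF.analyticOnNhd hU).deriv.continuousOn.mono hsub).mul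
      (hφ.continuousOn.mono hsub)).circleIntegrable hρ
  have hc2 : CircleIntegrable (fun z => F z * deriv φ z) 0 ρ :=
    ((hF.continuousOn.mono hsub).mul
      ((hφ.analyticOnNhd hU).deriv.continuousOn.mono hsub)).circleIntegrable hρ
  rw [circleIntegral_add' hc1 hc2] at h0
  exact eq_neg_of_add_eq_zero_left h0

/-- Cauchy-type formula for the exterior function. -/
lemma ext_cauchy {r ρ : ℝ} (hr : 0 < r) (hrρ : r < ρ) {h : ℂ → ℂ}
    (hh : DifferentiableOn ℂ h {z : ℂ | r < ‖z‖})
    (hlim : Tendsto h (comap (fun z : ℂ => ‖z‖) atTop) (nhds 0)) {z₁ : ℂ}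
    (hz₁ : ρ < ‖z₁‖) :
    (∮ z in C(0, ρ), h z * (z - z₁)⁻¹) = -(2 * Real.pi * Complex.I) * h z₁ := by
  have hρ0 : 0 < ρ := hr.trans hrρ
  have hUo : IsOpen {z : ℂ | r < ‖z‖} :=
    isOpen_lt continuous_const continuous_norm
  have hz₁U : z₁ ∈ {z : ℂ | r < ‖z‖} := by
    simp only [Set.mem_setOf_eq]; linarith
  have hz₁d : DifferentiableAt ℂ h z₁ := hh.differentiableAt (hUo.mem_nhds hz₁U)
  set G := dslope h z₁ with hG
  have hGcont : ContinuousOn G {z : ℂ | r < ‖z‖} :=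
    (continuousOn_dslope (hUo.mem_nhds hz₁U)).mpr ⟨hh.continuousOn, hz₁d⟩
  have hGd : ∀ z : ℂ, r < ‖z‖ → z ≠ z₁ → DifferentiableAt ℂ G z := by
    intro z hz hne
    exact (differentiableAt_dslope_of_ne hne).mpr
      (hh.differentiableAt (hUo.mem_nhds hz))
  -- decomposition on any sphere avoiding z₁
  have hdecomp : ∀ {s : ℝ}, ‖z₁‖ ≠ s →
      Set.EqOn (fun z => h z * (z - z₁)⁻¹) (fun z => G z + h z₁ * (z - z₁)⁻¹)
        (sphere (0:ℂ) s) := by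
    intro s hs z hz
    have hzs : ‖z‖ = s := by simpa using hz
    have hne : z ≠ z₁ := fun hzz => hs (by rw [← hzz, hzs])
    have hne' : z - z₁ ≠ 0 := sub_ne_zero.2 hne
    simp only [hG, dslope_of_ne h hne, slope_def_field]
    field_simp
    ring
  -- the inner circle integral of `(z - z₁)⁻¹` vanishes
  have hinv0 : (∮ z in C(0, ρ), (z - z₁)⁻¹) = 0 := by
    refine Complex.circleIntegral_eq_zero_of_differentiable_on_off_countable hρ0.le
      Set.countable_empty ?_ ?_
    · refine (continuousOn_id.sub continuousOn_const).inv₀ ?_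
      intro z hz
      have hza : ‖z‖ ≤ ρ := by
        simpa using mem_closedBall_zero_iff.mp hz
      exact sub_ne_zero.2 fun e => by rw [show z = z₁ from e] at hza; linarith
    · rintro z ⟨hz, -⟩
      have hza : ‖z‖ < ρ := by
        simpa using mem_ball_zero_iff.mp hz
      exact (differentiableAt_id.sub_const z₁).inv
        (sub_ne_zero.2 fun e => by rw [show z = z₁ from e] at hza; linarith)
  have hGint : ∀ {s : ℝ}, ρ ≤ s → CircleIntegrable G 0 s := by
    intro s hs
    refine (hGcont.mono ?_).circleIntegrable (hρ0.le.trans hs)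
    intro z hz
    have : ‖z‖ = s := by simpa using hz
    simp only [Set.mem_setOf_eq, this]; linarith
  have hinvint : ∀ {s : ℝ}, ρ ≤ s → ‖z₁‖ ≠ s →
      CircleIntegrable (fun z => h z₁ * (z - z₁)⁻¹) 0 s := by
    intro s hs hns
    refine ContinuousOn.circleIntegrable (hρ0.le.trans hs) ?_
    refine continuousOn_const.mul ((continuousOn_id.sub continuousOn_const).inv₀ ?_)
    intro z hz
    have hzs : ‖z‖ = s := by simpa using hz
    refine sub_ne_zero.2 fun hzz => ?_
    exact hns (by rw [← show z = z₁ from hzz, hzs])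
  -- inner integral equals integral of G
  have hstep1 : (∮ z in C(0, ρ), h z * (z - z₁)⁻¹) = ∮ z in C(0, ρ), G z := by
    rw [circleIntegral.integral_congr hρ0.le (hdecomp (by linarith : ‖z₁‖ ≠ ρ)),
      circleIntegral_add' (hGint le_rfl) (hinvint le_rfl (by linarith))]
    have : (∮ z in C(0, ρ), h z₁ * (z - z₁)⁻¹) = h z₁ * ∮ z in C(0, ρ), (z - z₁)⁻¹ := by
      simpa using circleIntegral.integral_smul (h z₁) (fun z => (z - z₁)⁻¹) 0 ρ
    rw [this, hinv0, mul_zero, add_zero]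
  have key : ∀ R' : ℝ, ‖z₁‖ < R' →
      (∮ z in C(0, ρ), h z * (z - z₁)⁻¹) + (2 * Real.pi * Complex.I) * h z₁
        = ∮ z in C(0, R'), h z * (z - z₁)⁻¹ := by
    intro R' hR'
    have hρR' : ρ ≤ R' := le_of_lt (hz₁.trans hR')
    have hann : (∮ z in C(0, R'), G z) = ∮ z in C(0, ρ), G z := by
      refine Complex.circleIntegral_eq_of_differentiable_on_annulus_off_countable hρ0 hρR'
        (Set.countable_singleton z₁) (hGcont.mono ?_) ?_
      · intro z hz
        rcases hz with ⟨-, hz2⟩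
        rw [Metric.mem_ball, dist_zero_right, not_lt] at hz2
        simp only [Set.mem_setOf_eq]; linarith
      · rintro z ⟨⟨-, hz2⟩, hz3⟩
        rw [Metric.mem_closedBall, dist_zero_right, not_le] at hz2
        exact hGd z (by linarith) (by simpa using hz3)
    have hinvR : (∮ z in C(0, R'), (z - z₁)⁻¹) = 2 * Real.pi * Complex.I := by
      refine circleIntegral.integral_sub_inv_of_mem_ball ?_
      rw [Metric.mem_ball, dist_zero_right]; exact hR'
    have hcongr := circleIntegral.integral_congr (hρ0.le.trans hρR')
      (hdecomp (by linarith : ‖z₁‖ ≠ R'))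
    rw [hcongr, circleIntegral_add' (hGint hρR') (hinvint hρR' (by linarith)), hann, ← hstep1]
    have : (∮ z in C(0, R'), h z₁ * (z - z₁)⁻¹) = h z₁ * ∮ z in C(0, R'), (z - z₁)⁻¹ := by
      simpa using circleIntegral.integral_smul (h z₁) (fun z => (z - z₁)⁻¹) 0 R'
    rw [this, hinvR]; ring
  -- norm estimate
  have hnorm : ‖(∮ z in C(0, ρ), h z * (z - z₁)⁻¹) + (2 * Real.pi * Complex.I) * h z₁‖ ≤ 0 := by
    refine le_of_forall_gt_imp_ge_of_dense fun ε hε => ?_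
    set ε₁ := ε / (4 * Real.pi + 1) with hε₁
    have hπ := Real.pi_pos
    have hε₁pos : 0 < ε₁ := div_pos hε (by linarith)
    have hmem := hlim (Metric.ball_mem_nhds (0:ℂ) hε₁pos)
    rw [mem_map, mem_comap] at hmem
    obtain ⟨t, ht, hsub⟩ := hmem
    rw [mem_atTop_sets] at ht
    obtain ⟨M, hM⟩ := ht
    have hbound : ∀ z : ℂ, M ≤ ‖z‖ → ‖h z‖ < ε₁ := by
      intro z hz
      have : h z ∈ Metric.ball (0:ℂ) ε₁ := hsub (hM _ hz)
      simpa [dist_zero_right] using this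
    set R' := max M (max ρ (2 * ‖z₁‖)) + 1 with hR'def
    have h2z : 2 * ‖z₁‖ ≤ R' - 1 := by
      have h5 : 2 * ‖z₁‖ ≤ max M (max ρ (2 * ‖z₁‖)) :=
        le_max_of_le_right (le_max_right ρ (2 * ‖z₁‖))
      simp only [hR'def]; linarith
    have habs : (0:ℝ) ≤ ‖z₁‖ := norm_nonneg _
    have hR'z₁ : ‖z₁‖ < R' := by linarith
    have hR'pos : 0 < R' := by linarith
    have hR'M : M ≤ R' := by
      have := le_max_left M (max ρ (2 * ‖z₁‖))
      simp only [hR'def]; linarith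
    have hhalf : R' / 2 ≤ R' - ‖z₁‖ := by linarith
    have hhalfpos : 0 < R' / 2 := by linarith
    have hCb : ∀ z ∈ sphere (0:ℂ) R', ‖h z * (z - z₁)⁻¹‖ ≤ ε₁ * (R' / 2)⁻¹ := by
      intro z hz
      have hzR : ‖z‖ = R' := by simpa using hz
      have hzz : R' / 2 ≤ ‖z - z₁‖ := by
        have h3 := norm_sub_norm_le z z₁
        rw [hzR] at h3
        linarith
      rw [norm_mul, norm_inv]
      have h1 : ‖h z‖ ≤ ε₁ := le_of_lt (hbound z (by rw [hzR]; exact hR'M))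
      have h2 : ‖z - z₁‖⁻¹ ≤ (R' / 2)⁻¹ := by
        apply inv_anti₀ hhalfpos hzz
      exact mul_le_mul h1 h2 (by positivity) hε₁pos.le
    have hle := circleIntegral.norm_integral_le_of_norm_le_const hR'pos.le hCb
    rw [← key R' hR'z₁] at hle
    calc ‖(∮ z in C(0, ρ), h z * (z - z₁)⁻¹) + 2 * ↑Real.pi * Complex.I * h z₁‖
        ≤ 2 * Real.pi * R' * (ε₁ * (R' / 2)⁻¹) := hle
      _ = 4 * Real.pi * ε₁ := by field_simp; ring
      _ ≤ ε := by
          rw [hε₁, ← mul_div_assoc, div_le_iff₀ (by linarith : (0:ℝ) < 4 * Real.pi + 1)]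
          nlinarith [hε.le, hπ.le]
  have : (∮ z in C(0, ρ), h z * (z - z₁)⁻¹) + (2 * Real.pi * Complex.I) * h z₁ = 0 :=
    norm_le_zero_iff.mp hnorm
  linear_combination this

/-- For `f = g + h` with `g` holomorphic on `{|z| < R}`, `h` holomorphic
on `{|z| > r}` vanishing at `∞`, `0 < r < ρ < R`, and any `z₁` with `|z₁| > ρ`:
`(1/(2πi)) ∮_{|z₂|=ρ} (g'(z₂)+h'(z₂)) Log(1 - z₂/z₁) dz₂ = h(z₁)`. -/
theorem stmt5 (r ρ R : ℝ) (hr : 0 < r) (hrρ : r < ρ) (hρR : ρ < R)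
    (g h : ℂ → ℂ)
    (hg : DifferentiableOn ℂ g {z : ℂ | ‖z‖ < R})
    (hh : DifferentiableOn ℂ h {z : ℂ | r < ‖z‖})
    (hlim : Tendsto h (comap (fun z : ℂ => ‖z‖) atTop) (nhds 0)) :
    ∀ z₁ : ℂ, ρ < ‖z₁‖ →
      (2 * Real.pi * Complex.I)⁻¹ *
        (∮ z₂ in C(0, ρ), (deriv g z₂ + deriv h z₂) * Complex.log (1 - z₂ / z₁))
        = h z₁ := by
  intro z₁ hz₁
  have hρ0 : 0 < ρ := hr.trans hrρ
  have hz₁0 : z₁ ≠ 0 := by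
    intro e; rw [e] at hz₁; simp at hz₁; linarith
  set φ : ℂ → ℂ := fun z => Complex.log (1 - z / z₁) with hφdef
  set Uφ : Set ℂ := {z : ℂ | ‖z‖ < ‖z₁‖} with hUφ
  have hUφo : IsOpen Uφ := isOpen_lt continuous_norm continuous_const
  -- φ has derivative (z - z₁)⁻¹ on Uφ
  have hφd : ∀ z ∈ Uφ, HasDerivAt φ ((z - z₁)⁻¹) z := by
    intro z hz
    have hzlt : ‖z‖ < ‖z₁‖ := hz
    have hne : z - z₁ ≠ 0 := sub_ne_zero.2 fun e => by rw [e] at hzlt; linarith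
    have hslit : 1 - z / z₁ ∈ Complex.slitPlane := by
      refine Complex.mem_slitPlane_iff.mpr (Or.inl ?_)
      have h1 : (1 - z / z₁).re = 1 - (z / z₁).re := by simp
      have h2 : (z / z₁).re ≤ ‖z / z₁‖ := Complex.re_le_norm _
      have h3 : ‖z / z₁‖ < 1 := by
        rw [norm_div, div_lt_one (norm_pos_iff.mpr hz₁0)]
        exact hzlt
      rw [h1]; linarith
    have hin : HasDerivAt (fun z : ℂ => 1 - z / z₁) (-(1 / z₁)) z :=
      ((hasDerivAt_id z).div_const z₁).const_sub 1
    have hlog := (Complex.hasDerivAt_log hslit).comp z hin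
    have heq : (1 - z / z₁)⁻¹ * -(1 / z₁) = (z - z₁)⁻¹ := by
      have hne2 : 1 - z / z₁ ≠ 0 := Complex.slitPlane_ne_zero hslit
      refine eq_inv_of_mul_eq_one_right ?_
      rw [mul_comm, mul_assoc, show -(1 / z₁) * (z - z₁) = 1 - z / z₁ by field_simp; ring,
        inv_mul_cancel₀ hne2]
    rw [heq] at hlog
    exact hlog
  have hφdiff : DifferentiableOn ℂ φ Uφ := fun z hz =>
    ((hφd z hz).differentiableAt).differentiableWithinAt
  have hφderiv : ∀ z ∈ Uφ, deriv φ z = (z - z₁)⁻¹ := fun z hz => (hφd z hz).deriv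
  have hsphUφ : sphere (0:ℂ) ρ ⊆ Uφ := by
    intro z hz
    have : ‖z‖ = ρ := by simpa using hz
    simp only [hUφ, Set.mem_setOf_eq, this]; exact hz₁
  -- Part A : the g-part integrates to zero
  have hUA : IsOpen (Metric.ball (0:ℂ) (min R (‖z₁‖))) := Metric.isOpen_ball
  have hballA : ∀ z ∈ Metric.ball (0:ℂ) (min R (‖z₁‖)),
      ‖z‖ < R ∧ ‖z‖ < ‖z₁‖ := by
    intro z hz
    rw [mem_ball_zero_iff, lt_min_iff] at hz
    exact hz
  have hsphA : sphere (0:ℂ) ρ ⊆ Metric.ball (0:ℂ) (min R (‖z₁‖)) := by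
    intro z hz
    have : ‖z‖ = ρ := by simpa using hz
    rw [mem_ball_zero_iff, this, lt_min_iff]
    exact ⟨hρR, hz₁⟩
  have hpartA : (∮ z in C(0, ρ), deriv g z * φ z) = 0 := by
    have hbp := circleInt_byparts hUA
      (hg.mono fun z hz => (hballA z hz).1)
      (hφdiff.mono fun z hz => (hballA z hz).2) hρ0.le hsphA
    rw [hbp]
    have hcongr : Set.EqOn (fun z => g z * deriv φ z) (fun z => g z * (z - z₁)⁻¹)
        (sphere (0:ℂ) ρ) := fun z hz => by
      simp only []
      rw [hφderiv z (hsphUφ hz)]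
    rw [circleIntegral.integral_congr hρ0.le hcongr]
    have h0 : (∮ z in C(0, ρ), g z * (z - z₁)⁻¹) = 0 := by
      refine Complex.circleIntegral_eq_zero_of_differentiable_on_off_countable hρ0.le
        Set.countable_empty ?_ ?_
      · refine ContinuousOn.mul (hg.continuousOn.mono ?_)
          ((continuousOn_id.sub continuousOn_const).inv₀ ?_)
        · intro z hz
          have : ‖z‖ ≤ ρ := by
            simpa using mem_closedBall_zero_iff.mp hz
          simp only [Set.mem_setOf_eq]; linarith
        · intro z hz
          have hza : ‖z‖ ≤ ρ := by
            simpa using mem_closedBall_zero_iff.mp hz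
          exact sub_ne_zero.2 fun e => by rw [show z = z₁ from e] at hza; linarith
      · rintro z ⟨hz, -⟩
        have hza : ‖z‖ < ρ := by
          simpa using mem_ball_zero_iff.mp hz
        refine DifferentiableAt.mul ?_ ?_
        · exact hg.differentiableAt ((isOpen_lt continuous_norm continuous_const).mem_nhds
            (by simp only [Set.mem_setOf_eq]; linarith))
        · exact (differentiableAt_id.sub_const z₁).inv
            (sub_ne_zero.2 fun e => by rw [show z = z₁ from e] at hza; linarith)
    rw [h0, neg_zero]
  -- Part B : the h-part
  have hUBo : IsOpen ({z : ℂ | r < ‖z‖} ∩ Uφ) :=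
    (isOpen_lt continuous_const continuous_norm).inter hUφo
  have hsphB : sphere (0:ℂ) ρ ⊆ {z : ℂ | r < ‖z‖} ∩ Uφ := by
    intro z hz
    have : ‖z‖ = ρ := by simpa using hz
    exact ⟨by simp only [Set.mem_setOf_eq, this]; linarith, hsphUφ hz⟩
  have hpartB : (∮ z in C(0, ρ), deriv h z * φ z) = (2 * Real.pi * Complex.I) * h z₁ := by
    have hbp := circleInt_byparts hUBo
      (hh.mono Set.inter_subset_left)
      (hφdiff.mono Set.inter_subset_right) hρ0.le hsphB
    rw [hbp]
    have hcongr : Set.EqOn (fun z => h z * deriv φ z) (fun z => h z * (z - z₁)⁻¹)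
        (sphere (0:ℂ) ρ) := fun z hz => by
      simp only []
      rw [hφderiv z (hsphUφ hz)]
    rw [circleIntegral.integral_congr hρ0.le hcongr, ext_cauchy hr hrρ hh hlim hz₁]
    ring
  -- Assemble
  have hint1 : CircleIntegrable (fun z => deriv g z * φ z) 0 ρ := by
    refine ContinuousOn.circleIntegrable hρ0.le (ContinuousOn.mul ?_ ?_)
    · exact ((hg.analyticOnNhd (isOpen_lt continuous_norm continuous_const)).deriv.continuousOn).mono
        (fun z hz => by
          have : ‖z‖ = ρ := by simpa using hz
          simp only [Set.mem_setOf_eq, this]; exact hρR)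
    · exact (hφdiff.continuousOn).mono hsphUφ
  have hint2 : CircleIntegrable (fun z => deriv h z * φ z) 0 ρ := by
    refine ContinuousOn.circleIntegrable hρ0.le (ContinuousOn.mul ?_ ?_)
    · exact ((hh.analyticOnNhd (isOpen_lt continuous_const continuous_norm)).deriv.continuousOn).mono
        (fun z hz => by
          have : ‖z‖ = ρ := by simpa using hz
          simp only [Set.mem_setOf_eq, this]; exact hrρ)
    · exact (hφdiff.continuousOn).mono hsphUφ
  have hsplit : (∮ z₂ in C(0, ρ), (deriv g z₂ + deriv h z₂) * Complex.log (1 - z₂ / z₁))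
      = (∮ z in C(0, ρ), deriv g z * φ z) + ∮ z in C(0, ρ), deriv h z * φ z := by
    rw [← circleIntegral_add' hint1 hint2]
    refine circleIntegral.integral_congr hρ0.le fun z hz => ?_
    simp only [hφdef]; ring
  rw [hsplit, hpartA, hpartB, zero_add]
  have hπI : (2 * (Real.pi:ℂ) * Complex.I) ≠ 0 := by
    simp [Real.pi_ne_zero, Complex.I_ne_zero]
  field_simp
end

section
/- Let 0 < r < ρ < R. Suppose g is holomorphic on {z : |z| < R}, h is holomorphic on {z : |z| > r}, and h(z) → 0 as |z| → ∞. Then for every z₂ with |z₂| < ρ one has (1/(2πi)) ∮_{|z₁|=ρ} (g′(z₁) + h′(z₁)) · Log(1 − z₂/z₁) dz₁ = −g(z₂) + (1/(2πi)) ∮_{|z|=ρ} (g(z) + h(z)) / z dz, where Log is the principal branch of the complex logarithm. -/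
open Complex Filter

/-- For `f = g + h` with `g` holomorphic on `{|z| < R}`, `h` holomorphic
on `{|z| > r}` vanishing at `∞`, `0 < r < ρ < R`, and any `z₂` with `|z₂| < ρ`:
`(1/(2πi)) ∮_{|z₁|=ρ} (g'(z₁)+h'(z₁)) Log(1 - z₂/z₁) dz₁
  = −g(z₂) + (1/(2πi)) ∮_{|z|=ρ} (g(z)+h(z))/z dz`. -/
theorem stmt6 (r ρ R : ℝ) (hr : 0 < r) (hrρ : r < ρ) (hρR : ρ < R)
    (g h : ℂ → ℂ)
    (hg : DifferentiableOn ℂ g {z : ℂ | ‖z‖ < R})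
    (hh : DifferentiableOn ℂ h {z : ℂ | r < ‖z‖})
    (hlim : Tendsto h (comap (fun z : ℂ => ‖z‖) atTop) (nhds 0)) :
    ∀ z₂ : ℂ, ‖z₂‖ < ρ →
      (2 * Real.pi * Complex.I)⁻¹ *
        (∮ z₁ in C(0, ρ), (deriv g z₁ + deriv h z₁) * Complex.log (1 - z₂ / z₁))
        = -(g z₂) +
          (2 * Real.pi * Complex.I)⁻¹ * (∮ z in C(0, ρ), (g z + h z) / z) := by
  intro z₂ hz₂
  have hρ : 0 < ρ := hr.trans hrρ
  have hoR : IsOpen {z : ℂ | ‖z‖ < R} :=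
    isOpen_lt continuous_norm continuous_const
  have hor : IsOpen {z : ℂ | r < ‖z‖} :=
    isOpen_lt continuous_const continuous_norm
  set L : ℂ → ℂ := fun z => Complex.log (1 - z₂ / z) with hLdef
  -- derivative of L at any point with |z₂| < |z|
  have key : ∀ z : ℂ, ‖z₂‖ < ‖z‖ →
      HasDerivAt L ((z - z₂)⁻¹ - z⁻¹) z := by
    intro z hz
    have hz0 : z ≠ 0 := by
      rintro rfl; rw [norm_zero] at hz; exact (norm_nonneg _).not_gt hz
    have hzz₂ : z - z₂ ≠ 0 := by
      rw [sub_ne_zero]; rintro rfl; exact lt_irrefl _ hz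
    have habs : ‖z₂ / z‖ < 1 := by
      rw [norm_div, div_lt_one (lt_of_le_of_lt (norm_nonneg _) hz)]; exact hz
    have hslit : (1 - z₂ / z) ∈ Complex.slitPlane := by
      rw [Complex.mem_slitPlane_iff]
      left
      have h2 : (z₂ / z).re ≤ ‖z₂ / z‖ := Complex.re_le_norm _
      simp only [Complex.sub_re, Complex.one_re]
      linarith
    have hne : (1 : ℂ) - z₂ / z ≠ 0 := by
      intro h0
      have h1 : z₂ / z = 1 := by linear_combination -h0
      rw [h1] at habs
      simp at habs
    have hu : HasDerivAt (fun w : ℂ => 1 - z₂ / w) (z₂ / z ^ 2) z := by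
      have h1 := ((hasDerivAt_inv hz0).const_mul z₂).const_sub 1
      simp only [div_eq_mul_inv]
      refine h1.congr_deriv ?_
      ring
    have hc := (Complex.hasDerivAt_log hslit).comp z hu
    refine hc.congr_deriv ?_
    field_simp
    ring
  -- facts about points of the sphere
  have hsph : ∀ z ∈ Metric.sphere (0:ℂ) ρ, ‖z‖ = ρ := fun z hz => by
    simpa using hz
  have hgd : ∀ z ∈ Metric.sphere (0:ℂ) ρ, DifferentiableAt ℂ g z := fun z hz =>
    hg.differentiableAt (hoR.mem_nhds (by simp only [Set.mem_setOf_eq, hsph z hz]; exact hρR))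
  have hhd : ∀ z ∈ Metric.sphere (0:ℂ) ρ, DifferentiableAt ℂ h z := fun z hz =>
    hh.differentiableAt (hor.mem_nhds (by simp only [Set.mem_setOf_eq, hsph z hz]; exact hrρ))
  have hz₂' : ∀ z ∈ Metric.sphere (0:ℂ) ρ, ‖z₂‖ < ‖z‖ := fun z hz => by
    rw [hsph z hz]; exact hz₂
  have hzne : ∀ z ∈ Metric.sphere (0:ℂ) ρ, z ≠ 0 := by
    intro z hz hz0
    have h1 := hz₂' z hz
    rw [hz0, norm_zero] at h1
    exact (norm_nonneg _).not_gt h1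
  have hzsub : ∀ z ∈ Metric.sphere (0:ℂ) ρ, z - z₂ ≠ 0 := by
    intro z hz
    rw [sub_ne_zero]
    rintro rfl
    exact lt_irrefl _ (hz₂' z hz)
  -- main vanishing integral: ∮ ((g+h)·L)' = 0
  have hF : ∀ z ∈ Metric.sphere (0:ℂ) ρ,
      HasDerivWithinAt (fun w => (g w + h w) * L w)
        ((fun z => (deriv g z + deriv h z) * L z
            + (g z + h z) * ((z - z₂)⁻¹ - z⁻¹)) z)
        (Metric.sphere (0:ℂ) ρ) z := by
    intro z hz
    have hk := key z (hz₂' z hz)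
    exact ((((hgd z hz).hasDerivAt).add ((hhd z hz).hasDerivAt)).mul hk).hasDerivWithinAt
  have hzero : (∮ z in C(0, ρ), ((deriv g z + deriv h z) * L z
      + (g z + h z) * ((z - z₂)⁻¹ - z⁻¹))) = 0 :=
    circleIntegral.integral_eq_zero_of_hasDerivWithinAt hρ.le hF
  -- continuity facts on the sphere
  have hcontL : ContinuousOn L (Metric.sphere (0:ℂ) ρ) := fun z hz =>
    ((key z (hz₂' z hz)).continuousAt).continuousWithinAt
  have hcontf : ContinuousOn (fun z => g z + h z) (Metric.sphere (0:ℂ) ρ) := fun z hz =>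
    (((hgd z hz).continuousAt).add ((hhd z hz).continuousAt)).continuousWithinAt
  have hsubR : Metric.sphere (0:ℂ) ρ ⊆ {z : ℂ | ‖z‖ < R} := fun z hz => by
    simp only [Set.mem_setOf_eq, hsph z hz]; exact hρR
  have hsubr : Metric.sphere (0:ℂ) ρ ⊆ {z : ℂ | r < ‖z‖} := fun z hz => by
    simp only [Set.mem_setOf_eq, hsph z hz]; exact hrρ
  have hcontdg : ContinuousOn (deriv g) (Metric.sphere (0:ℂ) ρ) :=
    ((hg.analyticOnNhd hoR).deriv.continuousOn).mono hsubR
  have hcontdh : ContinuousOn (deriv h) (Metric.sphere (0:ℂ) ρ) :=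
    ((hh.analyticOnNhd hor).deriv.continuousOn).mono hsubr
  have hcontsub : ContinuousOn (fun z : ℂ => (z - z₂)⁻¹) (Metric.sphere (0:ℂ) ρ) := fun z hz =>
    (((continuousAt_id.sub continuousAt_const)).inv₀ (hzsub z hz)).continuousWithinAt
  have hcontinv : ContinuousOn (fun z : ℂ => z⁻¹) (Metric.sphere (0:ℂ) ρ) := fun z hz =>
    (continuousAt_id.inv₀ (hzne z hz)).continuousWithinAt
  -- circle integrabilities
  have iA : CircleIntegrable (fun z => (deriv g z + deriv h z) * L z) 0 ρ :=
    ContinuousOn.circleIntegrable hρ.le ((hcontdg.add hcontdh).mul hcontL)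
  have iB : CircleIntegrable (fun z => (g z + h z) * ((z - z₂)⁻¹ - z⁻¹)) 0 ρ :=
    ContinuousOn.circleIntegrable hρ.le (hcontf.mul (hcontsub.sub hcontinv))
  have iB1 : CircleIntegrable (fun z => (g z + h z) * (z - z₂)⁻¹) 0 ρ :=
    ContinuousOn.circleIntegrable hρ.le (hcontf.mul hcontsub)
  have iB2 : CircleIntegrable (fun z => (g z + h z) * z⁻¹) 0 ρ :=
    ContinuousOn.circleIntegrable hρ.le (hcontf.mul hcontinv)
  have iH : CircleIntegrable (fun z => (z - z₂)⁻¹ * h z) 0 ρ :=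
    ContinuousOn.circleIntegrable hρ.le
      (hcontsub.mul fun z hz => ((hhd z hz).continuousAt).continuousWithinAt)
  -- split off the A part
  have E2 : (∮ z in C(0, ρ), (deriv g z + deriv h z) * L z)
      = -∮ z in C(0, ρ), (g z + h z) * ((z - z₂)⁻¹ - z⁻¹) := by
    have h1 := circleIntegral.integral_sub (iA.add iB) iB
    simp only [Pi.add_apply, add_sub_cancel_right] at h1
    rw [h1, hzero, zero_sub]
  -- split B into two integrals
  have E3 : (∮ z in C(0, ρ), (g z + h z) * ((z - z₂)⁻¹ - z⁻¹))
      = (∮ z in C(0, ρ), (g z + h z) * (z - z₂)⁻¹)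
        - ∮ z in C(0, ρ), (g z + h z) * z⁻¹ := by
    rw [← circleIntegral.integral_sub iB1 iB2]
    simp only [mul_sub]
  -- split B1 into g and h parts
  have iG : CircleIntegrable (fun z => (z - z₂)⁻¹ * g z) 0 ρ :=
    ContinuousOn.circleIntegrable hρ.le
      (hcontsub.mul fun z hz => ((hgd z hz).continuousAt).continuousWithinAt)
  have E4 : (∮ z in C(0, ρ), (g z + h z) * (z - z₂)⁻¹)
      = (∮ z in C(0, ρ), (z - z₂)⁻¹ * g z) + ∮ z in C(0, ρ), (z - z₂)⁻¹ * h z := by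
    have h1 := circleIntegral.integral_sub iB1 iH
    have h2 : (∮ z in C(0, ρ), ((g z + h z) * (z - z₂)⁻¹ - (z - z₂)⁻¹ * h z))
        = ∮ z in C(0, ρ), (z - z₂)⁻¹ * g z := by
      refine circleIntegral.integral_congr hρ.le fun z hz => ?_
      ring
    linear_combination h2 - h1
  -- Cauchy integral formula for g
  have E5 : (∮ z in C(0, ρ), (z - z₂)⁻¹ * g z) = (2 * Real.pi * Complex.I) * g z₂ := by
    have hsub : Metric.closedBall (0:ℂ) ρ ⊆ {z : ℂ | ‖z‖ < R} := fun z hz => by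
      rw [Metric.mem_closedBall, dist_zero_right] at hz
      exact lt_of_le_of_lt hz hρR
    have := (hg.mono hsub).circleIntegral_sub_inv_smul
      (w := z₂) (by simpa [Metric.mem_ball, dist_zero_right] using hz₂)
    simpa [smul_eq_mul] using this
  -- the h part vanishes
  have hdiffH : ∀ z : ℂ, ρ ≤ ‖z‖ →
      DifferentiableAt ℂ (fun w => (w - z₂)⁻¹ * h w) z := by
    intro z hz
    have h1 : z - z₂ ≠ 0 := by
      rw [sub_ne_zero]; rintro rfl; exact absurd hz (not_le.2 hz₂)
    have h2 : DifferentiableAt ℂ h z :=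
      hh.differentiableAt (hor.mem_nhds
        (by simp only [Set.mem_setOf_eq]; exact lt_of_lt_of_le hrρ hz))
    exact ((differentiableAt_id.sub_const z₂).inv h1).mul h2
  have hann : ∀ ρ' : ℝ, ρ ≤ ρ' →
      (∮ z in C(0, ρ'), (z - z₂)⁻¹ * h z) = ∮ z in C(0, ρ), (z - z₂)⁻¹ * h z := by
    intro ρ' hle
    refine Complex.circleIntegral_eq_of_differentiable_on_annulus_off_countable hρ hle
      Set.countable_empty ?_ ?_
    · intro z hz
      have hz1 : ρ ≤ ‖z‖ := by
        have h3 := hz.2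
        rw [Metric.mem_ball, dist_zero_right, not_lt] at h3
        exact h3
      exact (hdiffH z hz1).continuousAt.continuousWithinAt
    · intro z hz
      have hz1 : ρ ≤ ‖z‖ := by
        have h3 := hz.1.2
        rw [Metric.mem_closedBall, dist_zero_right, not_le] at h3
        exact h3.le
      exact hdiffH z hz1
  have hsmall : ∀ ε : ℝ, 0 < ε → ‖∮ z in C(0, ρ), (z - z₂)⁻¹ * h z‖ ≤ ε := by
    intro ε hε
    have hπ : (0:ℝ) < Real.pi := Real.pi_pos
    set δ := ε / (4 * Real.pi + 1) with hδdef
    have hδ : 0 < δ := by positivity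
    have hev : ∀ᶠ z in comap (fun z : ℂ => ‖z‖) atTop, ‖h z‖ < δ := by
      have := Metric.tendsto_nhds.mp hlim δ hδ
      simpa [dist_zero_right] using this
    rw [eventually_comap, eventually_atTop] at hev
    obtain ⟨M, hM⟩ := hev
    set ρ' := max ρ (max M (2 * ‖z₂‖ + 1)) with hρ'def
    have hρρ' : ρ ≤ ρ' := le_max_left _ _
    have hρ'0 : 0 < ρ' := lt_of_lt_of_le hρ hρρ'
    have hM' : M ≤ ρ' := le_trans (le_max_left _ _) (le_max_right _ _)
    have habsz₂ : 2 * ‖z₂‖ + 1 ≤ ρ' := le_trans (le_max_right _ _) (le_max_right _ _)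
    rw [← hann ρ' hρρ']
    have hbound : ∀ z ∈ Metric.sphere (0:ℂ) ρ', ‖(z - z₂)⁻¹ * h z‖ ≤ (2 / ρ') * δ := by
      intro z hz
      have haz : ‖z‖ = ρ' := by
        rw [Metric.mem_sphere, dist_zero_right] at hz
        exact hz
      have h1 : ρ' / 2 ≤ ‖z - z₂‖ := by
        have h2 := norm_sub_norm_le z z₂
        rw [haz] at h2
        linarith
      have h2 : ‖h z‖ ≤ δ := (hM (‖z‖) (haz ▸ hM') z rfl).le
      rw [norm_mul, norm_inv]
      have h3 : (0:ℝ) < ρ' / 2 := by linarith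
      have h4 : ‖z - z₂‖⁻¹ ≤ (ρ' / 2)⁻¹ := by
        apply inv_anti₀ h3 h1
      calc ‖z - z₂‖⁻¹ * ‖h z‖ ≤ (ρ' / 2)⁻¹ * δ :=
            mul_le_mul h4 h2 (norm_nonneg _) (by positivity)
        _ = (2 / ρ') * δ := by rw [inv_div]
    have h5 := circleIntegral.norm_integral_le_of_norm_le_const hρ'0.le hbound
    have h6 : 2 * Real.pi * ρ' * (2 / ρ' * δ) = 4 * Real.pi * δ := by
      field_simp
      ring
    rw [h6] at h5
    refine h5.trans ?_
    rw [hδdef, mul_div_assoc']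
    rw [div_le_iff₀ (by positivity)]
    nlinarith
  have E6 : (∮ z in C(0, ρ), (z - z₂)⁻¹ * h z) = 0 := by
    rw [← norm_le_zero_iff]
    exact le_of_forall_pos_le_add fun ε hε => by simpa using hsmall ε hε
  -- assemble
  have hdiv : (∮ z in C(0, ρ), (g z + h z) / z) = ∮ z in C(0, ρ), (g z + h z) * z⁻¹ := by
    simp only [div_eq_mul_inv]
  have h2πI : (2 * (Real.pi : ℂ) * Complex.I) ≠ 0 := by
    simp [Real.pi_ne_zero, Complex.I_ne_zero]
  rw [E2, E3, E4, E5, E6, hdiv]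
  field_simp
  ring
end

section
/- Fix integers m, n ≥ 1 and let ℓ ∈ ℂ[u, u⁻¹] be a Laurent polynomial of the form ℓ = uᵐ + Σ_{i=−n}^{m−1} cᵢuⁱ with c₋ₙ ≠ 0, and let χ ∈ ℂ((u⁻¹)) be the unique series with leading term u such that χᵐ = ℓ. Then for all integers 1 ≤ j₁, j₂ ≤ m−1 one has −res_∞ [ (ℓ′χ^{−j₁})₊ · (ℓ′χ^{−j₂})₊ / ℓ′ ] dz = m·δ_{m, j₁+j₂}. -/
noncomputable section

open HahnSeries

/-- Formal Laurent series over `ℂ`.  Throughout this file the Hahn-series variable is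
`t = u⁻¹`, so `LS` models the field `ℂ((u⁻¹))`: the coefficient of `uⁱ` is the Hahn
coefficient at index `-i`. -/
abbrev LS : Type := LaurentSeries ℂ

/-- Termwise derivative with respect to the Hahn-series variable `t`. -/
def Dt (f : LS) : LS := LaurentSeries.derivative ℂ f

/-- Truncation keeping the coefficients with (Hahn) index satisfying `P`. -/
def truncP (P : ℤ → Prop) [DecidablePred P] (f : LS) : LS :=
  ⟨fun j => if P j then f.coeff j else 0, by
    refine f.isPWO_support'.mono ?_
    intro j hj
    have hj' : (if P j then f.coeff j else 0) ≠ 0 := hj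
    by_cases h : P j
    · simpa [h] using hj'
    · simp [h] at hj'⟩

/-- `f₊`: the part of `f ∈ ℂ((u⁻¹))` with nonnegative powers of `u`
(Hahn indices `j ≤ 0` in the `t = u⁻¹` representation). -/
def uPos (f : LS) : LS := truncP (fun j => j ≤ 0) f

/-- The derivative `df/du` in the `t = u⁻¹` representation: `df/du = -t² · df/dt`. -/
def Du (f : LS) : LS := -(single (2 : ℤ) 1 * Dt f)

/-- `res_∞ f dz`: minus the coefficient of `u⁻¹`, i.e. minus the Hahn coefficient
at index `1` in the `t = u⁻¹` representation. -/
def resInf (f : LS) : ℂ := -(f.coeff 1)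

/-- The Laurent polynomial `ℓ = uᵐ + Σ_{i=−n}^{m−1} cᵢuⁱ`, in the `t = u⁻¹`
representation. -/
def ellInv (m n : ℕ) (c : ℤ → ℂ) : LS :=
  single (-(m : ℤ)) 1 + ∑ i ∈ Finset.Icc (-(n : ℤ)) ((m : ℤ) - 1), single (-i) (c i)

lemma Dt_coeff (f : LS) (j : ℤ) : (Dt f).coeff j = (j+1 : ℤ) • f.coeff (j+1) := by
  simp [Dt, LaurentSeries.derivative, LaurentSeries.hasseDeriv_coeff, Ring.choose_one_right]

lemma Dt_mul (f g : LS) : Dt (f * g) = Dt f * g + f * Dt g := by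
  ext j
  have hsf : ((fun a : ℤ => a - 1) '' f.support).IsPWO :=
    f.isPWO_support.image_of_monotone (fun a b h => by simpa using h)
  have hsg : ((fun a : ℤ => a - 1) '' g.support).IsPWO :=
    g.isPWO_support.image_of_monotone (fun a b h => by simpa using h)
  have hfsub : (Dt f).support ⊆ (fun a : ℤ => a - 1) '' f.support := by
    intro a ha
    have h : (Dt f).coeff a ≠ 0 := ha
    rw [Dt_coeff] at h
    exact ⟨a + 1, fun hc => h (by rw [hc, smul_zero]), by ring⟩
  have hgsub : (Dt g).support ⊆ (fun a : ℤ => a - 1) '' g.support := by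
    intro a ha
    have h : (Dt g).coeff a ≠ 0 := ha
    rw [Dt_coeff] at h
    exact ⟨a + 1, fun hc => h (by rw [hc, smul_zero]), by ring⟩
  rw [HahnSeries.coeff_add, Dt_coeff, HahnSeries.coeff_mul,
      HahnSeries.coeff_mul_left' hsf hfsub, HahnSeries.coeff_mul_right' hsg hgsub]
  have e1 : ∑ ij ∈ Finset.antidiagonal hsf g.isPWO_support j,
        (Dt f).coeff ij.1 * g.coeff ij.2
      = ∑ ij ∈ Finset.antidiagonal f.isPWO_support g.isPWO_support (j+1),
        ((ij.1 : ℤ) • f.coeff ij.1) * g.coeff ij.2 := by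
    refine Finset.sum_nbij' (fun ij => (ij.1 + 1, ij.2)) (fun ij => (ij.1 - 1, ij.2)) ?_ ?_ ?_ ?_ ?_
    · rintro ⟨a, b⟩ hab
      rw [Finset.mem_addAntidiagonal] at hab
      obtain ⟨⟨x, hx, hx'⟩, h2, h3⟩ := hab
      have hx2 : x - 1 = a := by simpa using hx'
      simp only [Finset.mem_addAntidiagonal]
      refine ⟨by simpa [show a + 1 = x by omega] using hx, h2, by omega⟩
    · rintro ⟨a, b⟩ hab
      rw [Finset.mem_addAntidiagonal] at hab
      simp only [Finset.mem_addAntidiagonal]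
      exact ⟨⟨a, hab.1, rfl⟩, hab.2.1, by omega⟩
    · rintro ⟨a, b⟩ _; simp
    · rintro ⟨a, b⟩ _; simp
    · rintro ⟨a, b⟩ hab
      simp [Dt_coeff]
  have e2 : ∑ ij ∈ Finset.antidiagonal f.isPWO_support hsg j,
        f.coeff ij.1 * (Dt g).coeff ij.2
      = ∑ ij ∈ Finset.antidiagonal f.isPWO_support g.isPWO_support (j+1),
        f.coeff ij.1 * ((ij.2 : ℤ) • g.coeff ij.2) := by
    refine Finset.sum_nbij' (fun ij => (ij.1, ij.2 + 1)) (fun ij => (ij.1, ij.2 - 1)) ?_ ?_ ?_ ?_ ?_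
    · rintro ⟨a, b⟩ hab
      rw [Finset.mem_addAntidiagonal] at hab
      obtain ⟨h1, ⟨x, hx, hx'⟩, h3⟩ := hab
      have hx2 : x - 1 = b := by simpa using hx'
      simp only [Finset.mem_addAntidiagonal]
      refine ⟨h1, by simpa [show b + 1 = x by omega] using hx, by omega⟩
    · rintro ⟨a, b⟩ hab
      rw [Finset.mem_addAntidiagonal] at hab
      simp only [Finset.mem_addAntidiagonal]
      exact ⟨hab.1, ⟨b, hab.2.1, rfl⟩, by omega⟩
    · rintro ⟨a, b⟩ _; simp
    · rintro ⟨a, b⟩ _; simp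
    · rintro ⟨a, b⟩ hab
      simp [Dt_coeff]
  rw [e1, e2, ← Finset.sum_add_distrib, Finset.smul_sum]
  refine Finset.sum_congr rfl ?_
  rintro ⟨a, b⟩ hab
  rw [Finset.mem_addAntidiagonal] at hab
  have h3 : a + b = j + 1 := hab.2.2
  have h4 : (a : ℂ) + (b : ℂ) = (j : ℂ) + 1 := by exact_mod_cast congrArg (fun t : ℤ => (t : ℂ)) h3
  simp only [zsmul_eq_mul, Int.cast_add, Int.cast_one]
  rw [← h4]; ring

lemma uPos_coeff (f : LS) (j : ℤ) : (uPos f).coeff j = if j ≤ 0 then f.coeff j else 0 := rfl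

abbrev Cc : ℂ →+* LS := HahnSeries.C

lemma Cc_mul_coeff (r : ℂ) (x : LS) (a : ℤ) : (Cc r * x).coeff a = r * x.coeff a := by
  rw [HahnSeries.C_apply, HahnSeries.coeff_single_zero_mul]

lemma Du_coeff (f : LS) (j : ℤ) : (Du f).coeff j = -((j - 1 : ℤ) • f.coeff (j - 1)) := by
  rw [Du, HahnSeries.coeff_neg, show j = (j - 2) + 2 by ring, HahnSeries.coeff_single_mul_add,
    one_mul, Dt_coeff, show j - 2 + 1 = j - 2 + 2 - 1 by ring]

lemma Du_coeff_one (f : LS) : (Du f).coeff 1 = 0 := by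
  rw [Du_coeff]; norm_num

lemma Du_one : Du (1 : LS) = 0 := by
  ext j
  rw [Du_coeff, HahnSeries.coeff_zero]
  rcases eq_or_ne j 1 with h | h
  · simp [h]
  · rw [HahnSeries.coeff_one, if_neg (by omega)]
    simp

lemma Du_mul (f g : LS) : Du (f * g) = Du f * g + f * Du g := by
  unfold Du
  rw [Dt_mul]
  ring

lemma vbelow_mul {A B : ℤ} {f g : LS} (hf : ∀ j < A, f.coeff j = 0)
    (hg : ∀ j < B, g.coeff j = 0) : ∀ j < A + B, (f * g).coeff j = 0 := by
  intro j hj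
  rw [HahnSeries.coeff_mul]
  apply Finset.sum_eq_zero
  intro ij hij
  rw [Finset.mem_addAntidiagonal] at hij
  by_cases ha : ij.1 < A
  · rw [hf _ ha, zero_mul]
  · rw [hg _ (by omega), mul_zero]

lemma Du_pow (f : LS) (k : ℕ) : Du (f ^ k) * f = Cc (k : ℂ) * (f ^ k * Du f) := by
  induction k with
  | zero => simp [Du_one]
  | succ k ih =>
    have hC : Cc ((k + 1 : ℕ) : ℂ) = Cc (k : ℂ) + 1 := by push_cast [map_add, map_one]; ring
    calc Du (f ^ (k+1)) * f = (Du (f ^ k) * f) * f + (f ^ k * Du f) * f := by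
          rw [pow_succ, Du_mul]; ring
      _ = (Cc (k : ℂ) * (f ^ k * Du f)) * f + (f ^ k * Du f) * f := by rw [ih]
      _ = Cc ((k + 1 : ℕ) : ℂ) * (f ^ (k+1) * Du f) := by rw [hC, pow_succ]; ring

lemma Du_zpow (f : LS) (hf : f ≠ 0) (k : ℤ) :
    Du (f ^ k) * f = Cc (k : ℂ) * (f ^ k * Du f) := by
  obtain ⟨p, rfl | rfl⟩ := k.eq_nat_or_neg
  · rw [zpow_natCast]
    exact_mod_cast Du_pow f p
  · have h1 : (f ^ p : LS) * f ^ (-(p:ℤ)) = 1 := by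
      rw [← zpow_natCast f p, ← zpow_add₀ hf]
      simp
    have h1' : (f ^ (-(p:ℤ)) : LS) * f ^ p = 1 := by rw [mul_comm]; exact h1
    have h2 : Du (f ^ p * f ^ (-(p:ℤ))) = 0 := by rw [h1, Du_one]
    rw [Du_mul] at h2
    have hneg : f ^ p * Du (f ^ (-(p:ℤ))) = -(Du (f ^ p) * f ^ (-(p:ℤ))) :=
      eq_neg_of_add_eq_zero_right (by linear_combination h2)
    have hC : Cc ((↑(-(p:ℤ)) : ℂ)) = -(Cc ((p:ℕ) : ℂ)) := by push_cast [map_neg]; ring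
    calc Du (f ^ (-(p:ℤ))) * f
        = (f ^ (-(p:ℤ)) * f ^ p) * (Du (f ^ (-(p:ℤ))) * f) := by rw [h1', one_mul]
      _ = f ^ (-(p:ℤ)) * f * (f ^ p * Du (f ^ (-(p:ℤ)))) := by ring
      _ = f ^ (-(p:ℤ)) * f * (-(Du (f ^ p) * f ^ (-(p:ℤ)))) := by rw [hneg]
      _ = -((Du (f ^ p) * f) * (f ^ (-(p:ℤ)) * f ^ (-(p:ℤ)))) := by ring
      _ = -((Cc ((p:ℕ) : ℂ) * (f ^ p * Du f)) * (f ^ (-(p:ℤ)) * f ^ (-(p:ℤ)))) := by rw [Du_pow]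
      _ = -(Cc ((p:ℕ) : ℂ)) * ((f ^ p * f ^ (-(p:ℤ))) * (f ^ (-(p:ℤ)) * Du f)) := by ring
      _ = Cc ((↑(-(p:ℤ)) : ℂ)) * (f ^ (-(p:ℤ)) * Du f) := by rw [h1, hC]; push_cast; ring

lemma coeff_sum {α : Type*} (s : Finset α) (F : α → LS) (j : ℤ) :
    (∑ i ∈ s, F i).coeff j = ∑ i ∈ s, (F i).coeff j :=
  map_sum (HahnSeries.coeff.addMonoidHom j) F s

section chi
variable {χ : LS} (hχ1 : χ.coeff (-1) = 1) (hχ2 : ∀ j : ℤ, j < -1 → χ.coeff j = 0)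
include hχ1 hχ2

lemma chi_ne : χ ≠ 0 := fun h => by simp [h] at hχ1

lemma chi_order : χ.order = -1 := by
  have h1 : χ.order ≤ -1 :=
    HahnSeries.order_le_of_coeff_ne_zero (by rw [hχ1]; exact one_ne_zero)
  have h2 : ¬ χ.order < -1 := fun h =>
    (show χ.coeff χ.order ≠ 0 by rw [← HahnSeries.leadingCoeff_eq]; exact HahnSeries.leadingCoeff_ne_zero.mpr (chi_ne hχ1 hχ2)) (hχ2 _ h)
  omega

lemma chiInv_order : (χ⁻¹).order = 1 ∧ (χ⁻¹).coeff 1 = 1 := by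
  have hχ0 := chi_ne hχ1 hχ2
  have hinv0 : χ⁻¹ ≠ 0 := inv_ne_zero hχ0
  have h3 := HahnSeries.coeff_mul_order_add_order χ⁻¹ χ
  rw [inv_mul_cancel₀ hχ0, HahnSeries.leadingCoeff_eq, HahnSeries.leadingCoeff_eq,
    chi_order hχ1 hχ2, hχ1, mul_one] at h3
  have hne : (χ⁻¹).coeff (χ⁻¹).order ≠ 0 := by rw [← HahnSeries.leadingCoeff_eq]; exact HahnSeries.leadingCoeff_ne_zero.mpr hinv0
  by_cases ho : (χ⁻¹).order + -1 = 0
  · have ho1 : (χ⁻¹).order = 1 := by omega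
    rw [ho, HahnSeries.coeff_one, if_pos rfl] at h3
    rw [ho1] at h3
    exact ⟨ho1, h3.symm⟩
  · rw [HahnSeries.coeff_one, if_neg ho] at h3
    exact absurd h3.symm hne
end chi


/-- For `ℓ = uᵐ + Σ_{i=−n}^{m−1} cᵢuⁱ` with `c₋ₙ ≠ 0` and `χ` the
unique series in `ℂ((u⁻¹))` with leading term `u` and `χᵐ = ℓ`, for all
`1 ≤ j₁, j₂ ≤ m−1`:  `−res_∞ [(ℓ′χ^{−j₁})₊ (ℓ′χ^{−j₂})₊ / ℓ′] dz = m·δ_{m,j₁+j₂}`. -/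
theorem stmt10 (m n : ℕ) (hm : 1 ≤ m) (hn : 1 ≤ n) (c : ℤ → ℂ)
    (hc : c (-(n : ℤ)) ≠ 0)
    (χ : LS) (hχ1 : χ.coeff (-1) = 1) (hχ2 : ∀ j : ℤ, j < -1 → χ.coeff j = 0)
    (hroot : χ ^ m = ellInv m n c) :
    ∀ j₁ j₂ : ℕ, 1 ≤ j₁ → j₁ ≤ m - 1 → 1 ≤ j₂ → j₂ ≤ m - 1 →
      -resInf (uPos (Du (ellInv m n c) * χ ^ (-(j₁ : ℤ))) *
          uPos (Du (ellInv m n c) * χ ^ (-(j₂ : ℤ))) / Du (ellInv m n c))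
        = (m : ℂ) * (if j₁ + j₂ = m then 1 else 0) := by
  intro j₁ j₂ hj₁ hj₁' hj₂ hj₂'
  have hχ0 : χ ≠ 0 := chi_ne hχ1 hχ2
  have hm2 : 2 ≤ m := by omega
  set L : LS := ellInv m n c with hLdef
  set L' : LS := Du L with hL'def
  -- coefficients of L
  have hLlow : ∀ j < -(m:ℤ), L.coeff j = 0 := by
    intro j hj
    rw [hLdef, ellInv, HahnSeries.coeff_add, coeff_sum]
    rw [HahnSeries.coeff_single_of_ne (by omega), Finset.sum_eq_zero, add_zero]
    intro i hi
    rw [Finset.mem_Icc] at hi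
    exact HahnSeries.coeff_single_of_ne (by omega)
  have hLm : L.coeff (-(m:ℤ)) = 1 := by
    rw [hLdef, ellInv, HahnSeries.coeff_add, coeff_sum]
    rw [HahnSeries.coeff_single_same, Finset.sum_eq_zero, add_zero]
    intro i hi
    rw [Finset.mem_Icc] at hi
    exact HahnSeries.coeff_single_of_ne (by omega)
  -- coefficients of L'
  have hL'low : ∀ j < 1 - (m:ℤ), L'.coeff j = 0 := by
    intro j hj
    rw [hL'def, Du_coeff, hLlow _ (by omega), smul_zero, neg_zero]
  have hL'm : L'.coeff (1 - (m:ℤ)) = (m:ℂ) := by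
    rw [hL'def, Du_coeff, show (1:ℤ) - m - 1 = -(m:ℤ) by ring, hLm, zsmul_eq_mul]
    push_cast
    ring
  have hmC : (m:ℂ) ≠ 0 := Nat.cast_ne_zero.mpr (by omega)
  have hL'0 : L' ≠ 0 := fun h => by
    rw [h, HahnSeries.coeff_zero] at hL'm
    exact hmC hL'm.symm
  -- χ⁻¹ facts
  have hinv := chiInv_order hχ1 hχ2
  have hinvlow : ∀ j < (1:ℤ), (χ⁻¹).coeff j = 0 := fun j hj =>
    HahnSeries.coeff_eq_zero_of_lt_order (by rw [hinv.1]; exact_mod_cast hj)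
  -- Du χ facts
  have hDuχlow : ∀ j < (0:ℤ), (Du χ).coeff j = 0 := by
    intro j hj
    rw [Du_coeff, hχ2 _ (by omega), smul_zero, neg_zero]
  have hDuχ0 : (Du χ).coeff 0 = 1 := by
    rw [Du_coeff, show (0:ℤ) - 1 = -1 by ring, hχ1]
    norm_num
  -- negative zpowers of χ vanish below 0
  have hzpow0 : ∀ k : ℕ, ∀ j < (0:ℤ), (χ ^ (-(k:ℤ))).coeff j = 0 := by
    intro k
    induction k with
    | zero => intro j hj; simp only [Nat.cast_zero, neg_zero, zpow_zero]
              rw [HahnSeries.coeff_one, if_neg (by omega)]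
    | succ k ih =>
      intro j hj
      have hsplit : χ ^ (-(k+1:ℕ):ℤ) = χ ^ (-(k:ℤ)) * χ⁻¹ := by
        rw [← zpow_neg_one, ← zpow_add₀ hχ0]
        congr 1
        push_cast
        ring
      rw [hsplit]
      exact vbelow_mul ih hinvlow j (by omega)
  -- (χ⁻¹ * Du χ).coeff 1 = 1
  have hlog : (χ⁻¹ * Du χ).coeff 1 = 1 := by
    have hr : ∀ j < (2:ℤ), (χ⁻¹ - single 1 1).coeff j = 0 := by
      intro j hj
      rw [HahnSeries.coeff_sub]
      rcases eq_or_ne j 1 with h | h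
      · rw [h, hinv.2, HahnSeries.coeff_single_same]; ring
      · rw [hinvlow _ (by omega), HahnSeries.coeff_single_of_ne h]; ring
    have hsplit : χ⁻¹ * Du χ = single 1 1 * Du χ + (χ⁻¹ - single 1 1) * Du χ := by ring
    have hone := HahnSeries.coeff_single_mul_add (r := (1:ℂ)) (x := Du χ) (a := (0:ℤ)) (b := (1:ℤ))
    norm_num at hone
    rw [hsplit, HahnSeries.coeff_add, vbelow_mul hr hDuχlow 1 (by omega), add_zero, hone, hDuχ0]
  -- the key residue computation
  have hLχ : L' * χ = Cc (m:ℂ) * (L * Du χ) := by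
    have : L = χ ^ (m:ℤ) := by rw [zpow_natCast, hroot]
    rw [hL'def, this]
    exact_mod_cast Du_zpow χ hχ0 (m:ℤ)
  have hkey : ∀ k : ℤ, (m:ℤ) - k ≠ 0 → (L' * χ ^ (-k)).coeff 1 = 0 := by
    intro k hk
    have hLz : L = χ ^ (m:ℤ) := by rw [zpow_natCast, hroot]
    have hmain : Cc ((m:ℂ) - (k:ℂ)) * (L' * χ ^ (-k)) = Cc (m:ℂ) * Du (χ ^ ((m:ℤ) - k)) := by
      apply mul_right_cancel₀ (b := χ ^ (k+1)) (zpow_ne_zero _ hχ0)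
      have hk1 : (χ : LS) ^ (k+1) = χ ^ k * χ := by rw [zpow_add₀ hχ0, zpow_one]
      have e1 : (L' * χ ^ (-k)) * χ ^ (k+1) = L' * χ := by
        rw [hk1, show (L' * χ ^ (-k)) * (χ ^ k * χ) = (χ ^ (-k) * χ ^ k) * (L' * χ) from by ring,
          ← zpow_add₀ hχ0, show -k + k = 0 by ring, zpow_zero, one_mul]
      have e3 : (χ : LS) ^ ((m:ℤ) - k) * χ ^ k = L := by
        rw [← zpow_add₀ hχ0, show (m:ℤ) - k + k = (m:ℤ) by ring, zpow_natCast, hroot]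
      calc (Cc ((m:ℂ) - (k:ℂ)) * (L' * χ ^ (-k))) * χ ^ (k+1)
          = Cc ((m:ℂ) - (k:ℂ)) * ((L' * χ ^ (-k)) * χ ^ (k+1)) := by ring
        _ = Cc ((m:ℂ) - (k:ℂ)) * (Cc (m:ℂ) * (L * Du χ)) := by rw [e1, hLχ]
        _ = Cc (m:ℂ) * (Cc (((m:ℤ) - k : ℤ) : ℂ) * (χ ^ ((m:ℤ) - k) * Du χ) * χ ^ k) := by
            rw [← e3]
            push_cast
            ring
        _ = Cc (m:ℂ) * ((Du (χ ^ ((m:ℤ) - k)) * χ) * χ ^ k) := by rw [Du_zpow χ hχ0]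
        _ = (Cc (m:ℂ) * Du (χ ^ ((m:ℤ) - k))) * χ ^ (k+1) := by rw [hk1]; ring
    have hcoeff := congrArg (fun x : LS => x.coeff 1) hmain
    simp only [Cc_mul_coeff] at hcoeff
    rw [Du_coeff_one, mul_zero] at hcoeff
    have hne : (m:ℂ) - (k:ℂ) ≠ 0 := by
      have h0 : (((m:ℤ) - k : ℤ) : ℂ) ≠ 0 := Int.cast_ne_zero.mpr hk
      push_cast at h0
      exact_mod_cast h0
    exact (mul_eq_zero.mp hcoeff).resolve_left hne
  have hkeym : (L' * χ ^ (-(m:ℤ))).coeff 1 = (m:ℂ) := by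
    have hmain : L' * χ ^ (-(m:ℤ)) = Cc (m:ℂ) * (χ⁻¹ * Du χ) := by
      apply mul_right_cancel₀ (b := χ ^ ((m:ℤ)+1)) (zpow_ne_zero _ hχ0)
      calc (L' * χ ^ (-(m:ℤ))) * χ ^ ((m:ℤ)+1)
          = (L' * χ) * (χ ^ (-(m:ℤ)) * χ ^ (m:ℤ)) := by
            rw [show ((m:ℤ)+1) = (m:ℤ) + 1 by rfl,
              show (χ:LS) ^ ((m:ℤ)+1) = χ ^ (m:ℤ) * χ by rw [zpow_add₀ hχ0, zpow_one]]
            ring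
        _ = Cc (m:ℂ) * (L * Du χ) := by
            rw [hLχ, ← zpow_add₀ hχ0, show -(m:ℤ) + m = 0 by ring, zpow_zero, mul_one]
        _ = (Cc (m:ℂ) * (χ⁻¹ * Du χ)) * χ ^ ((m:ℤ)+1) := by
            rw [show χ ^ ((m:ℤ)+1) = χ ^ (m:ℤ) * χ by rw [zpow_add₀ hχ0, zpow_one],
              show L = χ ^ (m:ℤ) by rw [zpow_natCast, hroot],
              show (χ⁻¹ : LS) = χ ^ (-1:ℤ) by rw [zpow_neg_one]]
            rw [show (Cc (m:ℂ) * (χ ^ (-1:ℤ) * Du χ)) * (χ ^ (m:ℤ) * χ)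
                = Cc (m:ℂ) * ((χ ^ (-1:ℤ) * χ) * χ ^ (m:ℤ) * Du χ) by ring,
              show (χ ^ (-1:ℤ) * χ : LS) = 1 by rw [zpow_neg_one, inv_mul_cancel₀ hχ0]]
            ring
    rw [hmain, Cc_mul_coeff, hlog, mul_one]
  -- pieces
  set A₁ : LS := L' * χ ^ (-(j₁:ℤ)) with hA₁
  set A₂ : LS := L' * χ ^ (-(j₂:ℤ)) with hA₂
  set N₁ : LS := A₁ - uPos A₁ with hN₁
  set N₂ : LS := A₂ - uPos A₂ with hN₂
  have hA₁1 : A₁.coeff 1 = 0 := hkey (j₁:ℤ) (by omega)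
  have hA₂1 : A₂.coeff 1 = 0 := hkey (j₂:ℤ) (by omega)
  have hNlow : ∀ (A : LS), A.coeff 1 = 0 → ∀ j < (2:ℤ), (A - uPos A).coeff j = 0 := by
    intro A hA j hj
    rw [HahnSeries.coeff_sub, uPos_coeff]
    rcases le_or_gt j 0 with h | h
    · rw [if_pos h]; ring
    · rw [if_neg (not_le.mpr h)]
      have hj1 : j = 1 := by omega
      subst hj1
      rw [hA]
      ring
  have hN₁low : ∀ j < (2:ℤ), N₁.coeff j = 0 := hNlow A₁ hA₁1
  have hN₂low : ∀ j < (2:ℤ), N₂.coeff j = 0 := hNlow A₂ hA₂1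
  have hzz : χ ^ (-(j₁:ℤ)) * χ ^ (-(j₂:ℤ)) = χ ^ (-((j₁+j₂ : ℕ) : ℤ)) := by
    rw [← zpow_add₀ hχ0]
    congr 1
    push_cast
    ring
  have he : uPos A₁ * uPos A₂ =
      (L' * χ ^ (-((j₁+j₂:ℕ):ℤ)) - χ ^ (-(j₁:ℤ)) * N₂ - χ ^ (-(j₂:ℤ)) * N₁) * L' + N₁ * N₂ := by
    have b1 : uPos A₁ = A₁ - N₁ := by rw [hN₁]; ring
    have b2 : uPos A₂ = A₂ - N₂ := by rw [hN₂]; ring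
    rw [b1, b2, ← hzz, hA₁, hA₂]
    ring
  have hq : uPos A₁ * uPos A₂ / L' =
      (L' * χ ^ (-((j₁+j₂:ℕ):ℤ)) - χ ^ (-(j₁:ℤ)) * N₂ - χ ^ (-(j₂:ℤ)) * N₁) + N₁ * N₂ / L' := by
    rw [he, add_div, mul_div_cancel_right₀ _ hL'0]
  have hc1 : (χ ^ (-(j₁:ℤ)) * N₂).coeff 1 = 0 := vbelow_mul (hzpow0 j₁) hN₂low 1 (by omega)
  have hc2 : (χ ^ (-(j₂:ℤ)) * N₁).coeff 1 = 0 := vbelow_mul (hzpow0 j₂) hN₁low 1 (by omega)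
  have hc3 : (N₁ * N₂ / L').coeff 1 = 0 := by
    have hNN : ∀ j < (4:ℤ), (N₁ * N₂).coeff j = 0 := vbelow_mul hN₁low hN₂low
    by_cases hNz : N₁ * N₂ = 0
    · rw [hNz, zero_div, HahnSeries.coeff_zero]
    · have hqne : N₁ * N₂ / L' ≠ 0 := div_ne_zero hNz hL'0
      have hqL : (N₁ * N₂ / L') * L' = N₁ * N₂ := div_mul_cancel₀ _ hL'0
      have hord := HahnSeries.coeff_mul_order_add_order (N₁ * N₂ / L') L'
      rw [hqL] at hord
      have hlead : (N₁ * N₂).coeff ((N₁ * N₂ / L').order + L'.order) ≠ 0 := by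
        rw [hord]
        exact mul_ne_zero (HahnSeries.leadingCoeff_ne_zero.mpr hqne)
          (HahnSeries.leadingCoeff_ne_zero.mpr hL'0)
      have h4 : (4:ℤ) ≤ (N₁ * N₂ / L').order + L'.order := by
        by_contra h
        exact hlead (hNN _ (by omega))
      have hLo : L'.order ≤ 1 - (m:ℤ) :=
        HahnSeries.order_le_of_coeff_ne_zero (by rw [hL'm]; exact hmC)
      exact HahnSeries.coeff_eq_zero_of_lt_order (by omega)
  simp only [resInf, neg_neg]
  rw [hq, HahnSeries.coeff_add, HahnSeries.coeff_sub, HahnSeries.coeff_sub, hc1, hc2, hc3]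
  by_cases hs : j₁ + j₂ = m
  · rw [if_pos hs, show (-((j₁+j₂:ℕ):ℤ)) = -(m:ℤ) by rw [hs], hkeym]
    ring
  · rw [if_neg hs, hkey ((j₁+j₂:ℕ):ℤ) (by omega)]
    ring
end
end

section
/- Let ρ > 0, let U ⊆ ℂ be an open set containing the circle C = {z : |z| = ρ}, let T ⊆ ℂ be open, and let ζ : T × U → ℂ be holomorphic in (t, z) and nowhere vanishing, satisfying ∂ζ/∂t = −ζᵏ · ∂ζ/∂z on T × U for a fixed integer k. Then for every integer j: (i) pointwise, ∂/∂t (∂_z ζ · ζʲ) = −∂/∂z (∂_z ζ · ζ^{j+k}); and (ii) for every t ∈ T, d/dt [ (1/(2πi)) ∮_C ∂_z ζ(t,z) · ζ(t,z)ʲ · z^{−1} dz ] = −(1/(2πi)) ∮_C ∂_z ( ∂_z ζ(t,z) · ζ(t,z)^{j+k} ) · z^{−1} dz; in particular this t-derivative depends on (j, k) only through the sum j + k. -/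
open Complex Metric Set Filter Topology

private lemma sliceZ {T U : Set ℂ} {ζ : ℂ → ℂ → ℂ}
    (hζ : DifferentiableOn ℂ (fun p : ℂ × ℂ => ζ p.1 p.2) (T ×ˢ U)) {t : ℂ} (ht : t ∈ T) :
    DifferentiableOn ℂ (ζ t) U := fun z hz =>
  (hζ (t, z) ⟨ht, hz⟩).comp z
    ((differentiableWithinAt_const t).prodMk differentiableWithinAt_id) (fun w hw => ⟨ht, hw⟩)

private lemma sliceT {T U : Set ℂ} {ζ : ℂ → ℂ → ℂ}
    (hζ : DifferentiableOn ℂ (fun p : ℂ × ℂ => ζ p.1 p.2) (T ×ˢ U)) {z : ℂ} (hz : z ∈ U) :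
    DifferentiableOn ℂ (fun s => ζ s z) T := fun t ht =>
  (hζ (t, z) ⟨ht, hz⟩).comp t
    (differentiableWithinAt_id.prodMk (differentiableWithinAt_const z)) (fun s hs => Set.mk_mem_prod hs hz)

private lemma deriv_bound {f : ℂ → ℂ} {c : ℂ} {r M : ℝ} (hr : 0 < r)
    (hf : DifferentiableOn ℂ f (closedBall c r)) (hM : ∀ w ∈ sphere c r, ‖f w‖ ≤ M) :
    ‖deriv f c‖ ≤ M / r :=
  Complex.norm_deriv_le_of_forall_mem_sphere_norm_le hr
    ⟨hf.mono ball_subset_closedBall, hf.continuousOn.mono closure_ball_subset_closedBall⟩ hM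

private lemma zpow_le_max {x m M : ℝ} (h0 : 0 < m) (h1 : m ≤ x) (h2 : x ≤ M) (n : ℤ) :
    x ^ n ≤ max (M ^ n) (m ^ n) := by
  have hx : 0 < x := h0.trans_le h1
  rcases n with p | p
  · refine le_max_of_le_left ?_
    simpa using pow_le_pow_left₀ hx.le h2 p
  · refine le_max_of_le_right ?_
    rw [zpow_negSucc, zpow_negSucc]
    exact inv_anti₀ (pow_pos h0 _) (pow_le_pow_left₀ h0.le h1 _)

private lemma mixed_partial {T U : Set ℂ} (hT : IsOpen T) (hU : IsOpen U) {ζ : ℂ → ℂ → ℂ}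
    (hζ : DifferentiableOn ℂ (fun p : ℂ × ℂ => ζ p.1 p.2) (T ×ˢ U)) {t z : ℂ}
    (ht : t ∈ T) (hz : z ∈ U) :
    HasDerivAt (fun s => deriv (ζ s) z) (deriv (fun w => deriv (fun s => ζ s w) t) z) t := by
  obtain ⟨εT, hεT, hTb⟩ : ∃ ε > 0, closedBall t ε ⊆ T :=
    (Metric.nhds_basis_closedBall.mem_iff).1 (hT.mem_nhds ht)
  obtain ⟨εU, hεU, hUb⟩ : ∃ ε > 0, closedBall z ε ⊆ U :=
    (Metric.nhds_basis_closedBall.mem_iff).1 (hU.mem_nhds hz)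
  set a : ℝ := εT / 2 with ha
  have ha0 : 0 < a := by positivity
  have hK : IsCompact (closedBall t εT ×ˢ closedBall z εU) :=
    (isCompact_closedBall _ _).prod (isCompact_closedBall _ _)
  have hKsub : closedBall t εT ×ˢ closedBall z εU ⊆ T ×ˢ U := Set.prod_mono hTb hUb
  obtain ⟨M, hM⟩ := hK.exists_bound_of_continuousOn (hζ.continuousOn.mono hKsub)
  have hM0 : 0 ≤ M := le_trans (norm_nonneg _)
    (hM (t, z) ⟨mem_closedBall_self hεT.le, mem_closedBall_self hεU.le⟩)
  -- first Cauchy estimate, on ∂ₜζ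
  have hu1 : ∀ σ ∈ closedBall t a, ∀ w ∈ closedBall z εU,
      ‖deriv (fun s => ζ s w) σ‖ ≤ M / a := by
    intro σ hσ w hw
    refine deriv_bound ha0 ((sliceT hζ (hUb hw)).mono ?_) ?_
    · refine (closedBall_subset_closedBall' ?_).trans hTb
      have := mem_closedBall.1 hσ
      simp only [ha]; linarith
    · intro s' hs'
      refine hM (s', w) ⟨?_, hw⟩
      have h1 : dist s' σ = a := mem_sphere.1 hs'
      have h2 : dist σ t ≤ a := mem_closedBall.1 hσ
      have := dist_triangle s' σ t
      exact mem_closedBall.2 (by simp only [ha] at *; linarith)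
  -- second Cauchy estimate, on ∂ₜ∂ₜζ
  have hu2 : ∀ σ ∈ closedBall t (a / 2), ∀ w ∈ closedBall z εU,
      ‖deriv (fun s' => deriv (fun s => ζ s w) s') σ‖ ≤ M / a / (a / 2) := by
    intro σ hσ w hw
    have hsubT : closedBall σ (a / 2) ⊆ closedBall t a := by
      refine closedBall_subset_closedBall' ?_
      have := mem_closedBall.1 hσ; linarith
    refine deriv_bound (by positivity) ?_ ?_
    · have han : AnalyticOnNhd ℂ (fun s => ζ s w) T := (sliceT hζ (hUb hw)).analyticOnNhd hT
      exact han.deriv.differentiableOn.mono (hsubT.trans (fun x hx => hTb (by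
        have := mem_closedBall.1 hx
        exact mem_closedBall.2 (by simp only [ha] at *; linarith))))
    · intro s' hs'
      exact hu1 s' (hsubT (sphere_subset_closedBall hs')) w hw
  set C : ℝ := M / a / (a / 2) with hC
  have hC0 : 0 ≤ C := by positivity
  -- Lipschitz bound for ∂ₜζ in t
  have hulip : ∀ σ ∈ closedBall t (a / 2), ∀ w ∈ closedBall z εU,
      ‖deriv (fun s => ζ s w) σ - deriv (fun s => ζ s w) t‖ ≤ C * ‖σ - t‖ := by
    intro σ hσ w hw
    have hcbT : closedBall t (a / 2) ⊆ T := fun x hx => hTb (mem_closedBall.2 (by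
      have := mem_closedBall.1 hx; simp only [ha] at *; linarith))
    refine Convex.norm_image_sub_le_of_norm_hasDerivWithin_le
      (f' := fun s' => deriv (fun s'' => deriv (fun s => ζ s w) s'') s') ?_
      (fun x hx => hu2 x hx w hw) (convex_closedBall _ _) (mem_closedBall_self (by positivity)) hσ
    intro x hx
    have han : AnalyticOnNhd ℂ (fun s => ζ s w) T := (sliceT hζ (hUb hw)).analyticOnNhd hT
    exact ((han.deriv x (hcbT hx)).differentiableAt.hasDerivAt).hasDerivWithinAt
  -- difference quotient estimate
  have hdq : ∀ s ∈ closedBall t (a / 2), ∀ w ∈ closedBall z εU,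
      ‖ζ s w - ζ t w - (s - t) * deriv (fun s => ζ s w) t‖ ≤ C * ‖s - t‖ * ‖s - t‖ := by
    intro s hs w hw
    have hst : ‖s - t‖ ≤ a / 2 := by
      have := mem_closedBall.1 hs; rwa [dist_eq_norm] at this
    have hsub2 : closedBall t ‖s - t‖ ⊆ closedBall t (a / 2) := closedBall_subset_closedBall hst
    have hcbT : closedBall t (a / 2) ⊆ T := fun x hx => hTb (mem_closedBall.2 (by
      have := mem_closedBall.1 hx; simp only [ha] at *; linarith))
    have key := Convex.norm_image_sub_le_of_norm_hasDerivWithin_le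
      (f := fun σ => ζ σ w - σ * deriv (fun s => ζ s w) t)
      (f' := fun σ => deriv (fun s => ζ s w) σ - deriv (fun s => ζ s w) t)
      (C := C * ‖s - t‖) (s := closedBall t ‖s - t‖)
      ?_ ?_ (convex_closedBall _ _) (mem_closedBall_self (norm_nonneg _))
      (y := s) (mem_closedBall.2 (by rw [dist_eq_norm]))
    · calc ‖ζ s w - ζ t w - (s - t) * deriv (fun s => ζ s w) t‖
          = ‖(ζ s w - s * deriv (fun s => ζ s w) t) - (ζ t w - t * deriv (fun s => ζ s w) t)‖ := by
            ring_nf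
        _ ≤ C * ‖s - t‖ * ‖s - t‖ := key
    · intro x hx
      have hd : DifferentiableAt ℂ (fun σ => ζ σ w) x :=
        (sliceT hζ (hUb hw)).differentiableAt (hT.mem_nhds (hcbT (hsub2 hx)))
      exact (hd.hasDerivAt.sub ((hasDerivAt_id x).mul_const _)).congr_deriv (by ring) |>.hasDerivWithinAt
    · intro x hx
      calc ‖deriv (fun s => ζ s w) x - deriv (fun s => ζ s w) t‖
          ≤ C * ‖x - t‖ := hulip x (hsub2 hx) w hw
        _ ≤ C * ‖s - t‖ := by
            have : ‖x - t‖ ≤ ‖s - t‖ := by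
              have := mem_closedBall.1 hx; rwa [dist_eq_norm] at this
            exact mul_le_mul_of_nonneg_left this hC0
  -- uniform convergence of difference quotients
  have hTU : TendstoUniformlyOn (fun s w => (s - t)⁻¹ * (ζ s w - ζ t w))
      (fun w => deriv (fun s => ζ s w) t) (𝓝[≠] t) (closedBall z εU) := by
    rw [Metric.tendstoUniformlyOn_iff]
    intro ε hε
    have hδ : 0 < min (a / 2) (ε / (C + 1)) := by positivity
    have hball : Metric.ball t (min (a / 2) (ε / (C + 1))) ∈ 𝓝[≠] t :=
      mem_nhdsWithin_of_mem_nhds (ball_mem_nhds _ hδ)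
    filter_upwards [hball, self_mem_nhdsWithin] with s hsball hsne
    intro w hw
    have hsnet : s ≠ t := hsne
    have hst : s - t ≠ 0 := sub_ne_zero.2 hsnet
    have hstn : 0 < ‖s - t‖ := by simpa [norm_pos_iff] using hst
    have hdist : ‖s - t‖ < min (a / 2) (ε / (C + 1)) := by
      have := mem_ball.1 hsball; rwa [dist_eq_norm] at this
    have hscb : s ∈ closedBall t (a / 2) :=
      mem_closedBall.2 (by rw [dist_eq_norm]; exact (hdist.trans_le (min_le_left _ _)).le)
    rw [dist_eq_norm]
    calc ‖deriv (fun s => ζ s w) t - (s - t)⁻¹ * (ζ s w - ζ t w)‖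
        = ‖s - t‖⁻¹ * ‖ζ s w - ζ t w - (s - t) * deriv (fun s => ζ s w) t‖ := by
          rw [← norm_inv, ← norm_mul, ← norm_neg]
          congr 1
          field_simp
          ring
      _ ≤ ‖s - t‖⁻¹ * (C * ‖s - t‖ * ‖s - t‖) := by
          exact mul_le_mul_of_nonneg_left (hdq s hscb w hw) (by positivity)
      _ = C * ‖s - t‖ := by
          rw [show ‖s - t‖⁻¹ * (C * ‖s - t‖ * ‖s - t‖)
              = ‖s - t‖⁻¹ * ‖s - t‖ * (C * ‖s - t‖) from by ring,
            inv_mul_cancel₀ hstn.ne', one_mul]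
      _ ≤ (C + 1) * ‖s - t‖ := by nlinarith
      _ < (C + 1) * (ε / (C + 1)) := by
          refine mul_lt_mul_of_pos_left (hdist.trans_le (min_le_right _ _)) (by positivity)
      _ = ε := by field_simp
  -- pass to derivatives
  have hTLU : TendstoLocallyUniformlyOn (fun s w => (s - t)⁻¹ * (ζ s w - ζ t w))
      (fun w => deriv (fun s => ζ s w) t) (𝓝[≠] t) (Metric.ball z εU) :=
    hTU.tendstoLocallyUniformlyOn.mono ball_subset_closedBall
  have hballU : Metric.ball z εU ⊆ U := ball_subset_closedBall.trans hUb
  have hev' : ∀ᶠ s in 𝓝[≠] t, DifferentiableOn ℂ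
      (fun w => (s - t)⁻¹ * (ζ s w - ζ t w)) (Metric.ball z εU) := by
    filter_upwards [mem_nhdsWithin_of_mem_nhds (hT.mem_nhds ht)] with s hs
    exact ((differentiableOn_const _).mul
      (((sliceZ hζ hs).mono hballU).sub ((sliceZ hζ ht).mono hballU)))
  have hderivconv := hTLU.deriv hev' Metric.isOpen_ball
  have htt := hderivconv.tendsto_at (mem_ball_self hεU)
  rw [hasDerivAt_iff_tendsto_slope]
  refine htt.congr' ?_
  filter_upwards [mem_nhdsWithin_of_mem_nhds (hT.mem_nhds ht), self_mem_nhdsWithin]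
    with s hsT hsne
  have hd1 : DifferentiableAt ℂ (fun w => ζ s w) z :=
    (sliceZ hζ hsT).differentiableAt (hU.mem_nhds hz)
  have hd2 : DifferentiableAt ℂ (fun w => ζ t w) z :=
    (sliceZ hζ ht).differentiableAt (hU.mem_nhds hz)
  show deriv (fun w => (s - t)⁻¹ * (ζ s w - ζ t w)) z = slope (fun σ => deriv (ζ σ) z) t s
  rw [deriv_const_mul (d := fun w => ζ s w - ζ t w) _ (hd1.sub hd2), deriv_fun_sub hd1 hd2, slope_def_field]
  rw [div_eq_inv_mul]

private lemma wside {U : Set ℂ} (hU : IsOpen U) {f : ℂ → ℂ} (hf : DifferentiableOn ℂ f U)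
    {z : ℂ} (hz : z ∈ U) (hnz : f z ≠ 0) (m : ℤ) :
    HasDerivAt (fun w => deriv f w * f w ^ m)
      (deriv (deriv f) z * f z ^ m + deriv f z * ((m : ℂ) * f z ^ (m - 1) * deriv f z)) z := by
  have hA : AnalyticOnNhd ℂ f U := hf.analyticOnNhd hU
  have h1 : HasDerivAt (deriv f) (deriv (deriv f) z) z :=
    ((hA.deriv z hz).differentiableAt).hasDerivAt
  have hb : HasDerivAt f (deriv f z) z := ((hA z hz).differentiableAt).hasDerivAt
  have h2 : HasDerivAt (fun w => f w ^ m) ((m : ℂ) * f z ^ (m - 1) * deriv f z) z := by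
    exact (hasDerivAt_zpow m (f z) (Or.inl hnz)).comp z hb
  exact h1.mul h2

private lemma tside {T U : Set ℂ} (hT : IsOpen T) (hU : IsOpen U) {ζ : ℂ → ℂ → ℂ}
    (hζ : DifferentiableOn ℂ (fun p : ℂ × ℂ => ζ p.1 p.2) (T ×ˢ U))
    (hne : ∀ t ∈ T, ∀ z ∈ U, ζ t z ≠ 0) {k : ℤ}
    (hev : ∀ t ∈ T, ∀ z ∈ U, deriv (fun s => ζ s z) t = -(ζ t z ^ k * deriv (ζ t) z))
    (j : ℤ) {t z : ℂ} (ht : t ∈ T) (hz : z ∈ U) :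
    HasDerivAt (fun s => deriv (ζ s) z * ζ s z ^ j)
      (-(deriv (deriv (ζ t)) z * ζ t z ^ (j + k)
        + deriv (ζ t) z * (((j + k : ℤ) : ℂ) * ζ t z ^ (j + k - 1) * deriv (ζ t) z))) t := by
  have hne' : ζ t z ≠ 0 := hne t ht z hz
  have h1 := mixed_partial hT hU hζ ht hz
  have hC1k := wside hU (sliceZ hζ ht) hz hne' k
  -- value of the inner z-derivative of ∂ₜζ
  have hd : deriv (fun w => deriv (fun s => ζ s w) t) z
      = -(deriv (deriv (ζ t)) z * ζ t z ^ k
          + deriv (ζ t) z * ((k : ℂ) * ζ t z ^ (k - 1) * deriv (ζ t) z)) := by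
    have heq : (fun w => deriv (fun s => ζ s w) t)
        =ᶠ[nhds z] fun w => -(deriv (ζ t) w * ζ t w ^ k) := by
      filter_upwards [hU.mem_nhds hz] with w hw
      rw [hev t ht w hw]; ring
    rw [heq.deriv_eq, (by exact hC1k.neg : HasDerivAt (fun w => -(deriv (ζ t) w * ζ t w ^ k)) _ z).deriv]
  have hb : HasDerivAt (fun s => ζ s z) (deriv (fun s => ζ s z) t) t :=
    ((sliceT hζ hz).differentiableAt (hT.mem_nhds ht)).hasDerivAt
  have h2 : HasDerivAt (fun s => ζ s z ^ j)
      ((j : ℂ) * ζ t z ^ (j - 1) * deriv (fun s => ζ s z) t) t := by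
    exact (hasDerivAt_zpow j (ζ t z) (Or.inl hne')).comp t hb
  have h4 := h1.mul h2
  refine h4.congr_deriv ?_
  rw [hd, hev t ht z hz]
  have e1 : ζ t z ^ (j + k) = ζ t z ^ k * ζ t z ^ j := by rw [add_comm, zpow_add₀ hne']
  have e2 : ζ t z ^ (j + k - 1) = ζ t z ^ (k - 1) * ζ t z ^ j := by
    rw [show j + k - 1 = (k - 1) + j by ring, zpow_add₀ hne']
  have e3 : ζ t z ^ (j + k - 1) = ζ t z ^ (j - 1) * ζ t z ^ k := by
    rw [show j + k - 1 = (j - 1) + k by ring, zpow_add₀ hne']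
  push_cast
  rw [e1, show ((j : ℂ) + (k : ℂ)) * ζ t z ^ (j + k - 1)
      = (j : ℂ) * (ζ t z ^ (j - 1) * ζ t z ^ k) + (k : ℂ) * (ζ t z ^ (k - 1) * ζ t z ^ j) from by
        rw [← e3, ← e2]; ring]
  ring

/-- Let `ζ(t,z)` be holomorphic in `(t,z)` and nowhere vanishing on
`T × U`, where `U` is an open set containing the circle `{|z| = ρ}` and `T` is open,
and suppose `∂ζ/∂t = −ζ^k ∂ζ/∂z` on `T × U`. Then for every integer `j`:
(i) pointwise `∂/∂t (∂_z ζ · ζ^j) = −∂/∂z (∂_z ζ · ζ^{j+k})`, and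
(ii) for every `t ∈ T`,
`d/dt [(1/(2πi)) ∮ ∂_z ζ · ζ^j · z⁻¹ dz] = −(1/(2πi)) ∮ ∂_z(∂_z ζ · ζ^{j+k}) · z⁻¹ dz`;
in particular this `t`-derivative depends on `(j,k)` only through `j + k`. -/
theorem stmt14 (ρ : ℝ) (hρ : 0 < ρ) (U : Set ℂ) (hU : IsOpen U)
    (hsub : Metric.sphere (0 : ℂ) ρ ⊆ U) (T : Set ℂ) (hT : IsOpen T)
    (ζ : ℂ → ℂ → ℂ)
    (hζ : DifferentiableOn ℂ (fun p : ℂ × ℂ => ζ p.1 p.2) (T ×ˢ U))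
    (hne : ∀ t ∈ T, ∀ z ∈ U, ζ t z ≠ 0)
    (k : ℤ)
    (hev : ∀ t ∈ T, ∀ z ∈ U, deriv (fun s => ζ s z) t = -(ζ t z ^ k * deriv (ζ t) z)) :
    ∀ j : ℤ,
      (∀ t ∈ T, ∀ z ∈ U,
        deriv (fun s => deriv (ζ s) z * ζ s z ^ j) t
          = -(deriv (fun w => deriv (ζ t) w * ζ t w ^ (j + k)) z)) ∧
      (∀ t ∈ T, HasDerivAt
        (fun s => (2 * Real.pi * Complex.I)⁻¹ *
          ∮ z in C(0, ρ), deriv (ζ s) z * ζ s z ^ j * z⁻¹)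
        (-((2 * Real.pi * Complex.I)⁻¹ *
          ∮ z in C(0, ρ), deriv (fun w => deriv (ζ t) w * ζ t w ^ (j + k)) z * z⁻¹)) t) := by
  intro j
  constructor
  · intro t ht z hz
    rw [(tside hT hU hζ hne hev j ht hz).deriv,
      (wside hU (sliceZ hζ ht) hz (hne t ht z hz) (j + k)).deriv]
  · intro t ht
    -- geometric setup
    obtain ⟨r, hr0, hrU⟩ :=
      (isCompact_sphere (0 : ℂ) ρ).exists_cthickening_subset_open hU hsub
    obtain ⟨εT, hεT, hTb⟩ : ∃ ε > 0, closedBall t ε ⊆ T :=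
      (Metric.nhds_basis_closedBall.mem_iff).1 (hT.mem_nhds ht)
    set K : Set ℂ := Metric.sphere (0 : ℂ) ρ with hKdef
    set Kc : Set (ℂ × ℂ) := closedBall t εT ×ˢ cthickening r K with hKc
    have hKcs : IsCompact Kc := (isCompact_closedBall _ _).prod (isCompact_sphere _ _).cthickening
    have hKcsub : Kc ⊆ T ×ˢ U := Set.prod_mono hTb hrU
    obtain ⟨M, hM⟩ := hKcs.exists_bound_of_continuousOn (hζ.continuousOn.mono hKcsub)
    have hKne : Kc.Nonempty := by
      refine ⟨(t, (ρ : ℂ)), mem_closedBall_self hεT.le, self_subset_cthickening _ ?_⟩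
      simp [hKdef, abs_of_pos hρ]
    obtain ⟨p₀, hp₀, hmin⟩ := hKcs.exists_isMinOn hKne
      ((continuous_norm.comp_continuousOn (hζ.continuousOn.mono hKcsub)))
    set m₀ : ℝ := ‖ζ p₀.1 p₀.2‖ with hm₀def
    have hm₀ : 0 < m₀ :=
      norm_pos_iff.2 (hne p₀.1 (hKcsub hp₀).1 p₀.2 (hKcsub hp₀).2)
    have hlow : ∀ p ∈ Kc, m₀ ≤ ‖ζ p.1 p.2‖ := fun p hp => hmin hp
    have hM0 : 0 < M := hm₀.trans_le (hlow _ hp₀ |>.trans (hM _ hp₀))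
    -- Cauchy estimates near the circle
    have hcbU : ∀ w ∈ K, closedBall w r ⊆ U := fun w hw =>
      (closedBall_subset_cthickening hw r).trans hrU
    have hg1 : ∀ s ∈ closedBall t εT, ∀ w ∈ K, ∀ w' ∈ closedBall w (r / 2),
        ‖deriv (ζ s) w'‖ ≤ M / (r / 2) := by
      intro s hs w hw w' hw'
      have hsub1 : closedBall w' (r / 2) ⊆ closedBall w r := by
        refine closedBall_subset_closedBall' ?_
        have := mem_closedBall.1 hw'; linarith
      refine deriv_bound (by positivity) ((sliceZ hζ (hTb hs)).mono (hsub1.trans (hcbU w hw))) ?_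
      intro x hx
      exact hM (s, x) ⟨hs, (closedBall_subset_cthickening hw r)
        (hsub1 (sphere_subset_closedBall hx))⟩
    have hg2 : ∀ s ∈ closedBall t εT, ∀ w ∈ K,
        ‖deriv (deriv (ζ s)) w‖ ≤ M / (r / 2) / (r / 2) := by
      intro s hs w hw
      refine deriv_bound (by positivity) ?_ ?_
      · have hA : AnalyticOnNhd ℂ (ζ s) U := (sliceZ hζ (hTb hs)).analyticOnNhd hU
        exact hA.deriv.differentiableOn.mono
          ((closedBall_subset_closedBall (by linarith)).trans (hcbU w hw))
      · intro x hx
        exact hg1 s hs w hw x (sphere_subset_closedBall hx)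
    have hζbound : ∀ n : ℤ, ∀ s ∈ closedBall t εT, ∀ w ∈ K,
        ‖ζ s w ^ n‖ ≤ max (M ^ n) (m₀ ^ n) := by
      intro n s hs w hw
      have hmem : (s, w) ∈ Kc := ⟨hs, self_subset_cthickening _ hw⟩
      rw [norm_zpow]
      exact zpow_le_max hm₀ (hlow _ hmem) (hM _ hmem) n
    set E : ℂ → ℂ → ℂ := fun s w =>
      -(deriv (deriv (ζ s)) w * ζ s w ^ (j + k)
        + deriv (ζ s) w * (((j + k : ℤ) : ℂ) * ζ s w ^ (j + k - 1) * deriv (ζ s) w)) with hEdef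
    set B1 : ℝ := M / (r / 2) with hB1
    set Z1 : ℝ := max (M ^ (j + k)) (m₀ ^ (j + k)) with hZ1
    set Z2 : ℝ := max (M ^ (j + k - 1)) (m₀ ^ (j + k - 1)) with hZ2
    set cJ : ℝ := ‖((j + k : ℤ) : ℂ)‖ with hcJ
    set Bd : ℝ := (B1 / (r / 2) * Z1 + cJ * Z2 * B1 * B1) * ρ⁻¹ with hBd
    have hB10 : 0 ≤ B1 := by positivity
    have hZ10 : 0 ≤ Z1 := le_max_of_le_left (zpow_pos hM0 _).le
    have hZ20 : 0 ≤ Z2 := le_max_of_le_left (zpow_pos hM0 _).le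
    have hcJ0 : 0 ≤ cJ := norm_nonneg _
    have hEb : ∀ s ∈ closedBall t εT, ∀ w ∈ K, ‖E s w * w⁻¹‖ ≤ Bd := by
      intro s hs w hw
      have hwn : ‖w‖ = ρ := mem_sphere_zero_iff_norm.1 hw
      have h1 := hg2 s hs w hw
      have h2 := hg1 s hs w hw w (mem_closedBall_self (by positivity))
      have h3 := hζbound (j + k) s hs w hw
      have h4 := hζbound (j + k - 1) s hs w hw
      rw [norm_mul, norm_inv, hwn, hBd]
      refine mul_le_mul_of_nonneg_right ?_ (by positivity)
      have hEexp : ‖E s w‖ = ‖deriv (deriv (ζ s)) w * ζ s w ^ (j + k)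
          + deriv (ζ s) w * (((j + k : ℤ) : ℂ) * ζ s w ^ (j + k - 1) * deriv (ζ s) w)‖ := by
        rw [hEdef, norm_neg]
      rw [hEexp]
      refine (norm_add_le _ _).trans ?_
      rw [norm_mul, norm_mul, norm_mul, norm_mul]
      calc ‖deriv (deriv (ζ s)) w‖ * ‖ζ s w ^ (j + k)‖
            + ‖deriv (ζ s) w‖ * (‖((j + k : ℤ) : ℂ)‖ * ‖ζ s w ^ (j + k - 1)‖ * ‖deriv (ζ s) w‖)
          = ‖deriv (deriv (ζ s)) w‖ * ‖ζ s w ^ (j + k)‖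
            + ‖((j + k : ℤ) : ℂ)‖ * ‖ζ s w ^ (j + k - 1)‖ * ‖deriv (ζ s) w‖ * ‖deriv (ζ s) w‖ := by
            ring
        _ ≤ B1 / (r / 2) * Z1 + cJ * Z2 * B1 * B1 := by
            have hB1r : M / (r / 2) / (r / 2) = B1 / (r / 2) := by rw [hB1]
            gcongr <;> first
              | exact h1.trans_eq hB1r
              | exact h2
              | exact h3
              | exact h4
              | exact le_rfl
              | positivity
    -- the circle parametrization
    have hsphK : ∀ θ : ℝ, circleMap 0 ρ θ ∈ K := fun θ => circleMap_mem_sphere _ hρ.le θ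
    have hKU : K ⊆ U := hsub
    have hcm_ne : ∀ θ : ℝ, circleMap 0 ρ θ ≠ 0 := fun θ => by
      simp [circleMap, Complex.exp_ne_zero, hρ.ne']
    have hdcm : Continuous fun θ : ℝ => deriv (circleMap 0 ρ) θ := by
      simp only [deriv_circleMap]
      exact (continuous_circleMap 0 ρ).mul continuous_const
    have hcont : ∀ s ∈ T, Continuous fun θ : ℝ =>
        deriv (circleMap 0 ρ) θ •
          (deriv (ζ s) (circleMap 0 ρ θ) * ζ s (circleMap 0 ρ θ) ^ j * (circleMap 0 ρ θ)⁻¹) := by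
      intro s hs
      have hA : AnalyticOnNhd ℂ (ζ s) U := (sliceZ hζ hs).analyticOnNhd hU
      have c1 : Continuous fun θ : ℝ => deriv (ζ s) (circleMap 0 ρ θ) :=
        hA.deriv.continuousOn.comp_continuous (continuous_circleMap 0 ρ)
          (fun θ => hKU (hsphK θ))
      have c2 : Continuous fun θ : ℝ => ζ s (circleMap 0 ρ θ) :=
        (sliceZ hζ hs).continuousOn.comp_continuous (continuous_circleMap 0 ρ)
          (fun θ => hKU (hsphK θ))
      have c2' : Continuous fun θ : ℝ => ζ s (circleMap 0 ρ θ) ^ j :=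
        c2.zpow₀ j (fun θ => Or.inl (hne s hs _ (hKU (hsphK θ))))
      have c3 : Continuous fun θ : ℝ => (circleMap 0 ρ θ)⁻¹ :=
        (continuous_circleMap 0 ρ).inv₀ hcm_ne
      exact hdcm.smul (((c1.mul c2').mul c3))
    have hcontE : Continuous fun θ : ℝ =>
        deriv (circleMap 0 ρ) θ • (E t (circleMap 0 ρ θ) * (circleMap 0 ρ θ)⁻¹) := by
      have hA : AnalyticOnNhd ℂ (ζ t) U := (sliceZ hζ ht).analyticOnNhd hU
      have c1 : Continuous fun θ : ℝ => deriv (ζ t) (circleMap 0 ρ θ) :=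
        hA.deriv.continuousOn.comp_continuous (continuous_circleMap 0 ρ)
          (fun θ => hKU (hsphK θ))
      have c1' : Continuous fun θ : ℝ => deriv (deriv (ζ t)) (circleMap 0 ρ θ) :=
        hA.deriv.deriv.continuousOn.comp_continuous (continuous_circleMap 0 ρ)
          (fun θ => hKU (hsphK θ))
      have c2 : Continuous fun θ : ℝ => ζ t (circleMap 0 ρ θ) :=
        (sliceZ hζ ht).continuousOn.comp_continuous (continuous_circleMap 0 ρ)
          (fun θ => hKU (hsphK θ))
      have hnec : ∀ θ : ℝ, ζ t (circleMap 0 ρ θ) ≠ 0 := fun θ => hne t ht _ (hKU (hsphK θ))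
      have c3 : Continuous fun θ : ℝ => (circleMap 0 ρ θ)⁻¹ :=
        (continuous_circleMap 0 ρ).inv₀ hcm_ne
      have cE : Continuous fun θ : ℝ => E t (circleMap 0 ρ θ) := by
        rw [hEdef]
        exact ((c1'.mul (c2.zpow₀ _ (fun θ => Or.inl (hnec θ)))).add
          (c1.mul ((continuous_const.mul (c2.zpow₀ _ (fun θ => Or.inl (hnec θ)))).mul c1))).neg
      exact hdcm.smul (cE.mul c3)
    have hball : Metric.ball t εT ⊆ T := ball_subset_closedBall.trans hTb
    have hmain := (intervalIntegral.hasDerivAt_integral_of_dominated_loc_of_deriv_le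
        (μ := MeasureTheory.volume) (a := 0) (b := 2 * Real.pi) (x₀ := t) (s := Metric.ball t εT)
        (bound := fun _ => ρ * Bd)
        (F := fun s θ => deriv (circleMap 0 ρ) θ •
          (deriv (ζ s) (circleMap 0 ρ θ) * ζ s (circleMap 0 ρ θ) ^ j * (circleMap 0 ρ θ)⁻¹))
        (F' := fun s θ => deriv (circleMap 0 ρ) θ •
          (E s (circleMap 0 ρ θ) * (circleMap 0 ρ θ)⁻¹))
        (Metric.ball_mem_nhds t hεT) ?m1 ?m2 ?m3 ?m4 ?m5 ?m6).2
    -- identify the derivative with the desired circle integral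
    have hF'eq : (∫ θ in (0:ℝ)..(2 * Real.pi), deriv (circleMap 0 ρ) θ •
          (E t (circleMap 0 ρ θ) * (circleMap 0 ρ θ)⁻¹))
        = -(∮ z in C(0, ρ), deriv (fun w => deriv (ζ t) w * ζ t w ^ (j + k)) z * z⁻¹) := by
      have : ∀ θ : ℝ, deriv (circleMap 0 ρ) θ • (E t (circleMap 0 ρ θ) * (circleMap 0 ρ θ)⁻¹)
          = -(deriv (circleMap 0 ρ) θ •
              (deriv (fun w => deriv (ζ t) w * ζ t w ^ (j + k)) (circleMap 0 ρ θ)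
                * (circleMap 0 ρ θ)⁻¹)) := by
        intro θ
        have hwU : circleMap 0 ρ θ ∈ U := hKU (hsphK θ)
        have hqd := (wside hU (sliceZ hζ ht) hwU (hne t ht _ hwU) (j + k)).deriv
        rw [hqd, hEdef]
        rw [neg_mul, smul_neg]
      rw [intervalIntegral.integral_congr (fun θ _ => this θ), intervalIntegral.integral_neg]
      rfl
    rw [hF'eq] at hmain
    have h2 := hmain.const_mul ((2 * Real.pi * Complex.I)⁻¹ : ℂ)
    rw [show -((2 * Real.pi * Complex.I)⁻¹ *
          ∮ z in C(0, ρ), deriv (fun w => deriv (ζ t) w * ζ t w ^ (j + k)) z * z⁻¹)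
        = (2 * Real.pi * Complex.I)⁻¹ *
          -(∮ z in C(0, ρ), deriv (fun w => deriv (ζ t) w * ζ t w ^ (j + k)) z * z⁻¹) from by ring]
    exact h2
    case m1 =>
      filter_upwards [hT.mem_nhds ht] with s hs
      exact (hcont s hs).aestronglyMeasurable
    case m2 => exact (hcont t ht).intervalIntegrable _ _
    case m3 => exact hcontE.aestronglyMeasurable
    case m4 =>
      refine Filter.Eventually.of_forall (fun θ _ s hs => ?_)
      rw [norm_smul]
      have hn : ‖deriv (circleMap 0 ρ) θ‖ = ρ := by
        simp [deriv_circleMap, norm_circleMap_zero, abs_of_pos hρ]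
      rw [hn]
      exact mul_le_mul_of_nonneg_left (hEb s (ball_subset_closedBall hs) _ (hsphK θ)) hρ.le
    case m5 => exact intervalIntegrable_const
    case m6 =>
      refine Filter.Eventually.of_forall (fun θ _ s hs => ?_)
      exact ((tside hT hU hζ hne hev j (hball hs) (hKU (hsphK θ))).mul_const
        ((circleMap 0 ρ θ)⁻¹)).const_smul (deriv (circleMap 0 ρ) θ)
end

section
/- Fix integers m, n ≥ 1 and let ℓ ∈ ℂ[u, u⁻¹] be a Laurent polynomial of the form ℓ = uᵐ + Σ_{i=−n}^{m−1} cᵢuⁱ with c₋ₙ ≠ 0, let χ ∈ ℂ((u⁻¹)) be the unique series with leading term u such that χᵐ = ℓ, and set R_j := ℓ′χ^{−j} ∈ ℂ((u⁻¹)) for integers j ≥ 1. Then for all 1 ≤ j₁, j₂, j₃ ≤ m−1: res_∞ [ (R_{j₁})₊ · (R_{j₂})₊ · (R_{j₃})₊ / ℓ′ ] dz = res_∞ [ R_{j₁+j₂}·(R_{j₃})₊ − (R_{j₁+j₃})₊·R_{j₂} − (R_{j₂+j₃})₊·R_{j₁} ] dz. -/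
noncomputable section

open HahnSeries

/-! ### Auxiliary lemmas -/

theorem LS.coeff_Dt (f : LS) (i : ℤ) : (Dt f).coeff i = ((i+1 : ℤ) : ℂ) * f.coeff (i+1) := by
  show (LaurentSeries.derivative ℂ f).coeff i = _
  rw [LaurentSeries.derivative_apply, LaurentSeries.hasseDeriv_coeff]
  push_cast
  rw [Ring.choose_one_right, zsmul_eq_mul]
  push_cast
  ring

theorem LS.coeff_Du (f : LS) (j : ℤ) : (Du f).coeff j = -(((j-1 : ℤ) : ℂ) * f.coeff (j-1)) := by
  show (-(single (2:ℤ) 1 * Dt f)).coeff j = _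
  rw [HahnSeries.coeff_neg]
  have h2 : (single (2:ℤ) (1:ℂ) * Dt f).coeff j = (Dt f).coeff (j - 2) := by
    have := HahnSeries.coeff_single_mul_add (r := (1:ℂ)) (x := Dt f) (a := j - 2) (b := 2)
    rw [one_mul] at this
    rw [show (j - 2) + 2 = j by ring] at this
    exact this
  rw [h2, LS.coeff_Dt, show j - 2 + 1 = j - 1 by ring]

theorem LS.coeff_ellInv (m n : ℕ) (c : ℤ → ℂ) (j : ℤ) (hj : j ≤ -(m:ℤ)) :
    (ellInv m n c).coeff j = if j = -(m:ℤ) then 1 else 0 := by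
  unfold ellInv
  rw [HahnSeries.coeff_add]
  have hsum : (∑ i ∈ Finset.Icc (-(n:ℤ)) ((m:ℤ)-1), single (-i) (c i)).coeff j
      = ∑ i ∈ Finset.Icc (-(n:ℤ)) ((m:ℤ)-1),
          (HahnSeries.coeff.addMonoidHom j) (single (-i) (c i)) :=
    map_sum (HahnSeries.coeff.addMonoidHom j) _ _
  rw [hsum]
  have hz : ∀ i ∈ Finset.Icc (-(n : ℤ)) ((m : ℤ) - 1),
      (HahnSeries.coeff.addMonoidHom j) (single (-i) (c i)) = 0 := by
    intro i hi
    simp only [Finset.mem_Icc] at hi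
    show (single (-i) (c i)).coeff j = 0
    exact HahnSeries.coeff_single_of_ne (by omega)
  rw [Finset.sum_eq_zero hz, add_zero]
  by_cases h : j = -(m:ℤ)
  · simp [h, HahnSeries.coeff_single_same]
  · simp [h, HahnSeries.coeff_single_of_ne h]

/-- Lower-bound of support is superadditive under multiplication. -/
theorem LS.lb_mul {f g : LS} {a b : ℤ} (hf : ∀ i, i < a → f.coeff i = 0)
    (hg : ∀ i, i < b → g.coeff i = 0) : ∀ k, k < a + b → (f * g).coeff k = 0 := by
  intro k hk
  rw [HahnSeries.coeff_mul]
  refine Finset.sum_eq_zero fun ij hij => ?_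
  obtain ⟨hi1, hi2, hi3⟩ := Finset.mem_addAntidiagonal.mp hij
  rcases lt_or_ge ij.1 a with h | h
  · rw [hf _ h, zero_mul]
  · rw [hg _ (by omega), mul_zero]

/-- Upper-bound of support is additive under multiplication. -/
theorem LS.ub_mul {f g : LS} {a b : ℤ} (hf : ∀ i, a < i → f.coeff i = 0)
    (hg : ∀ i, b < i → g.coeff i = 0) : ∀ k, a + b < k → (f * g).coeff k = 0 := by
  intro k hk
  rw [HahnSeries.coeff_mul]
  refine Finset.sum_eq_zero fun ij hij => ?_
  obtain ⟨hi1, hi2, hi3⟩ := Finset.mem_addAntidiagonal.mp hij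
  rcases lt_or_ge a ij.1 with h | h
  · rw [hf _ h, zero_mul]
  · rw [hg _ (by omega), mul_zero]

theorem LS.order_eq_of {f : LS} {a : ℤ} (h0 : f.coeff a ≠ 0)
    (hlt : ∀ i, i < a → f.coeff i = 0) : f.order = a := by
  have hf : f ≠ 0 := fun h => h0 (by rw [h]; simp)
  refine le_antisymm (HahnSeries.order_le_of_coeff_ne_zero h0) ?_
  by_contra h
  push_neg at h
  exact hf (HahnSeries.coeff_order_eq_zero.mp (hlt _ h))

theorem LS.inv_lb {f : LS} {a : ℤ} (h0 : f.coeff a ≠ 0)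
    (hlt : ∀ i, i < a → f.coeff i = 0) : ∀ i : ℤ, i < -a → f⁻¹.coeff i = 0 := by
  have hf : f ≠ 0 := fun h => h0 (by rw [h]; simp)
  have hinv : f⁻¹ ≠ 0 := inv_ne_zero hf
  have h1 : (f * f⁻¹).order = 0 := by
    rw [mul_inv_cancel₀ hf, HahnSeries.order_one]
  rw [HahnSeries.order_mul hf hinv, LS.order_eq_of h0 hlt] at h1
  have h2 : f⁻¹.order = -a := by omega
  intro i hi
  exact HahnSeries.coeff_eq_zero_of_lt_order (by omega)

theorem LS.coeff_uPos (f : LS) (i : ℤ) :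
    (uPos f).coeff i = if i ≤ 0 then f.coeff i else 0 := rfl

theorem LS.uPos_ub (f : LS) : ∀ i : ℤ, 0 < i → (uPos f).coeff i = 0 := by
  intro i hi
  rw [LS.coeff_uPos, if_neg (by omega)]

theorem LS.neg_part_lb (f : LS) : ∀ i : ℤ, i < 1 → (f - uPos f).coeff i = 0 := by
  intro i hi
  rw [HahnSeries.coeff_sub, LS.coeff_uPos, if_pos (by omega), sub_self]

/-- The purely algebraic identity underlying the residue computation. -/
theorem LS.keyalg {F : Type*} [Field F] (e a b d P1 P2 P3 P13 P23 : F) (he : e ≠ 0) :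
    P1 * P2 * P3 / e - (e * (a * b) * P3 - P13 * (e * b) - P23 * (e * a))
    = (P13 * P2 - (e * (a * d) - P13) * (e * b - P2))
      + (P23 * P1 - (e * (b * d) - P23) * (e * a - P1))
      + a * ((e * b - P2) * (e * d - P3))
      + b * ((e * a - P1) * (e * d - P3))
      + d * ((e * a - P1) * (e * b - P2))
      - (e * a - P1) * (e * b - P2) * (e * d - P3) * e⁻¹ := by
  field_simp
  ring

set_option maxHeartbeats 1000000 in
/-- With `ℓ = uᵐ + Σ_{i=−n}^{m−1} cᵢuⁱ`, `c₋ₙ ≠ 0`, `χ ∈ ℂ((u⁻¹))` the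
unique series with leading term `u` and `χᵐ = ℓ`, and `R_j := ℓ′χ^{−j}`, for all
`1 ≤ j₁, j₂, j₃ ≤ m−1`:
`res_∞ [(R_{j₁})₊(R_{j₂})₊(R_{j₃})₊/ℓ′] dz
  = res_∞ [R_{j₁+j₂}(R_{j₃})₊ − (R_{j₁+j₃})₊R_{j₂} − (R_{j₂+j₃})₊R_{j₁}] dz`. -/
theorem stmt19 (m n : ℕ) (hm : 1 ≤ m) (hn : 1 ≤ n) (c : ℤ → ℂ)
    (hc : c (-(n : ℤ)) ≠ 0)
    (χ : LS) (hχ1 : χ.coeff (-1) = 1) (hχ2 : ∀ j : ℤ, j < -1 → χ.coeff j = 0)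
    (hroot : χ ^ m = ellInv m n c)
    (R : ℕ → LS) (hR : ∀ j : ℕ, 1 ≤ j → R j = Du (ellInv m n c) * χ ^ (-(j : ℤ))) :
    ∀ j₁ j₂ j₃ : ℕ, 1 ≤ j₁ → j₁ ≤ m - 1 → 1 ≤ j₂ → j₂ ≤ m - 1 → 1 ≤ j₃ → j₃ ≤ m - 1 →
      resInf (uPos (R j₁) * uPos (R j₂) * uPos (R j₃) / Du (ellInv m n c))
        = resInf (R (j₁ + j₂) * uPos (R j₃)
            - uPos (R (j₁ + j₃)) * R j₂ - uPos (R (j₂ + j₃)) * R j₁) := by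
  intro j₁ j₂ j₃ h1 h1' h2 h2' h3 h3'
  set L : LS := Du (ellInv m n c) with hLdef
  -- basic coefficient facts about `L = ℓ′`
  have hmC : ((m:ℤ) : ℂ) ≠ 0 := by
    exact_mod_cast Nat.cast_ne_zero.mpr (by omega : m ≠ 0)
  have hL_lt : ∀ j : ℤ, j < 1 - (m:ℤ) → L.coeff j = 0 := by
    intro j hj
    rw [hLdef, LS.coeff_Du, LS.coeff_ellInv m n c _ (by omega), if_neg (by omega),
      mul_zero, neg_zero]
  have hL_top : L.coeff (1 - (m:ℤ)) ≠ 0 := by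
    rw [hLdef, LS.coeff_Du, show (1:ℤ) - (m:ℤ) - 1 = -(m:ℤ) by ring,
      LS.coeff_ellInv m n c _ le_rfl, if_pos rfl, mul_one]
    push_cast
    simpa using hmC
  have hL0 : L ≠ 0 := fun h => hL_top (by rw [h]; simp)
  -- lower bounds for the supports of `L⁻¹` and `χ⁻¹`
  have hLinv_lb : ∀ i : ℤ, i < 0 → (L⁻¹).coeff i = 0 := by
    intro i hi
    exact LS.inv_lb hL_top hL_lt i (by omega)
  have hχtop : χ.coeff (-1) ≠ 0 := by rw [hχ1]; exact one_ne_zero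
  have hT_lb : ∀ i : ℤ, i < 1 → (χ⁻¹).coeff i = 0 := by
    intro i hi
    exact LS.inv_lb hχtop hχ2 i (by omega)
  have hTpow : ∀ (k : ℕ) (i : ℤ), i < (k:ℤ) → ((χ⁻¹)^k).coeff i = 0 := by
    intro k
    induction k with
    | zero =>
      intro i hi
      rw [pow_zero, HahnSeries.coeff_one, if_neg (by omega)]
    | succ k ih =>
      intro i hi
      rw [pow_succ]
      exact LS.lb_mul ih hT_lb i (by push_cast; omega)
  -- rewrite `R` in terms of `L` and `T = χ⁻¹`
  have hRT : ∀ j : ℕ, 1 ≤ j → R j = L * (χ⁻¹)^j := by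
    intro j hj
    rw [hR j hj, zpow_neg, zpow_natCast, inv_pow]
  have e1 := hRT j₁ h1
  have e2 := hRT j₂ h2
  have e3 := hRT j₃ h3
  have e12 : R (j₁ + j₂) = L * ((χ⁻¹)^j₁ * (χ⁻¹)^j₂) := by
    rw [hRT (j₁ + j₂) (by omega), _root_.pow_add]
  have e13 : R (j₁ + j₃) = L * ((χ⁻¹)^j₁ * (χ⁻¹)^j₃) := by
    rw [hRT (j₁ + j₃) (by omega), _root_.pow_add]
  have e23 : R (j₂ + j₃) = L * ((χ⁻¹)^j₂ * (χ⁻¹)^j₃) := by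
    rw [hRT (j₂ + j₃) (by omega), _root_.pow_add]
  -- the key Hahn-series identity
  have key : uPos (R j₁) * uPos (R j₂) * uPos (R j₃) / L
      - (R (j₁+j₂) * uPos (R j₃) - uPos (R (j₁+j₃)) * R j₂ - uPos (R (j₂+j₃)) * R j₁)
    = (uPos (R (j₁+j₃)) * uPos (R j₂)
        - (R (j₁+j₃) - uPos (R (j₁+j₃))) * (R j₂ - uPos (R j₂)))
      + (uPos (R (j₂+j₃)) * uPos (R j₁)
        - (R (j₂+j₃) - uPos (R (j₂+j₃))) * (R j₁ - uPos (R j₁)))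
      + (χ⁻¹)^j₁ * ((R j₂ - uPos (R j₂)) * (R j₃ - uPos (R j₃)))
      + (χ⁻¹)^j₂ * ((R j₁ - uPos (R j₁)) * (R j₃ - uPos (R j₃)))
      + (χ⁻¹)^j₃ * ((R j₁ - uPos (R j₁)) * (R j₂ - uPos (R j₂)))
      - (R j₁ - uPos (R j₁)) * (R j₂ - uPos (R j₂)) * (R j₃ - uPos (R j₃)) * L⁻¹ := by
    rw [e1, e2, e3, e12, e13, e23]
    linear_combination LS.keyalg L ((χ⁻¹)^j₁) ((χ⁻¹)^j₂) ((χ⁻¹)^j₃)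
      (uPos (L * (χ⁻¹)^j₁)) (uPos (L * (χ⁻¹)^j₂)) (uPos (L * (χ⁻¹)^j₃))
      (uPos (L * ((χ⁻¹)^j₁ * (χ⁻¹)^j₃))) (uPos (L * ((χ⁻¹)^j₂ * (χ⁻¹)^j₃))) hL0
  -- residues of the error terms vanish
  have hN := LS.neg_part_lb
  have z1 : (uPos (R (j₁+j₃)) * uPos (R j₂)).coeff 1 = 0 :=
    LS.ub_mul (LS.uPos_ub _) (LS.uPos_ub _) 1 (by norm_num)
  have z2 : ((R (j₁+j₃) - uPos (R (j₁+j₃))) * (R j₂ - uPos (R j₂))).coeff 1 = 0 :=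
    LS.lb_mul (hN _) (hN _) 1 (by norm_num)
  have z3 : (uPos (R (j₂+j₃)) * uPos (R j₁)).coeff 1 = 0 :=
    LS.ub_mul (LS.uPos_ub _) (LS.uPos_ub _) 1 (by norm_num)
  have z4 : ((R (j₂+j₃) - uPos (R (j₂+j₃))) * (R j₁ - uPos (R j₁))).coeff 1 = 0 :=
    LS.lb_mul (hN _) (hN _) 1 (by norm_num)
  have z5 : ((χ⁻¹)^j₁ * ((R j₂ - uPos (R j₂)) * (R j₃ - uPos (R j₃)))).coeff 1 = 0 :=
    LS.lb_mul (hTpow j₁) (LS.lb_mul (hN _) (hN _)) 1 (by push_cast; omega)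
  have z6 : ((χ⁻¹)^j₂ * ((R j₁ - uPos (R j₁)) * (R j₃ - uPos (R j₃)))).coeff 1 = 0 :=
    LS.lb_mul (hTpow j₂) (LS.lb_mul (hN _) (hN _)) 1 (by push_cast; omega)
  have z7 : ((χ⁻¹)^j₃ * ((R j₁ - uPos (R j₁)) * (R j₂ - uPos (R j₂)))).coeff 1 = 0 :=
    LS.lb_mul (hTpow j₃) (LS.lb_mul (hN _) (hN _)) 1 (by push_cast; omega)
  have z8 : ((R j₁ - uPos (R j₁)) * (R j₂ - uPos (R j₂)) * (R j₃ - uPos (R j₃))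
      * L⁻¹).coeff 1 = 0 :=
    LS.lb_mul (LS.lb_mul (LS.lb_mul (hN _) (hN _)) (hN _)) hLinv_lb 1 (by norm_num)
  have hdiff : (uPos (R j₁) * uPos (R j₂) * uPos (R j₃) / L).coeff 1
      = (R (j₁+j₂) * uPos (R j₃) - uPos (R (j₁+j₃)) * R j₂
          - uPos (R (j₂+j₃)) * R j₁).coeff 1 := by
    have h0 : (uPos (R j₁) * uPos (R j₂) * uPos (R j₃) / L
        - (R (j₁+j₂) * uPos (R j₃) - uPos (R (j₁+j₃)) * R j₂
          - uPos (R (j₂+j₃)) * R j₁)).coeff 1 = 0 := by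
      rw [key]
      simp only [HahnSeries.coeff_add, HahnSeries.coeff_sub]
      rw [z1, z2, z3, z4, z5, z6, z7, z8]
      ring
    rw [HahnSeries.coeff_sub] at h0
    exact sub_eq_zero.mp h0
  simp only [resInf]
  rw [hdiff]
end
end
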